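/- arXiv:2403.12204 — 4 statements merged into one kernel-verified Lean document; each statement's English description precedes it below -/
import Mathlib

section
/- Let f_1, …, f_k and ρ_1, …, ρ_k be continuous piecewise linear functions on a polytope Ω, and define Υ(ω) = argmax_{j ∈ {1,…,k}} f_j(ω) and Ψ(ω) = max_{j ∈ Υ(ω)} ρ_j(ω). Then there exists a finite set P ⊆ Ω such that, for every ω ∈ Ω, the set {y ∈ ℝ : (ω, y) ∈ conv({(p, Ψ(p)) : p ∈ P})} is nonempty and its maximum equals cav(Ψ)(ω), the concave closure of Ψ evaluated at ω. -/
open Finset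

/-- A polytope is the convex hull of a finite set of points. -/
def IsPolytope {E : Type*} [AddCommGroup E] [Module ℝ E] (S : Set E) : Prop :=
  ∃ F : Finset E, S = convexHull ℝ (F : Set E)

/-- `f` is (continuous) piecewise linear on `Ω`: finitely many polytopes cover `Ω`
and `f` agrees with an affine function on each of them. -/
def IsPWLOn {E : Type*} [AddCommGroup E] [Module ℝ E] (Ω : Set E) (f : E → ℝ) : Prop :=
  ∃ (k : ℕ) (C : Fin k → Set E), (∀ i, IsPolytope (C i)) ∧ (⋃ i, C i) = Ω ∧
    ∀ i, ∃ g : E →ᵃ[ℝ] ℝ, ∀ x ∈ C i, f x = g x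

/-- A triangulation of `Ω`, encoded by the vertex sets of its simplices. -/
structure Triangulation (E : Type*) [AddCommGroup E] [Module ℝ E] (Ω : Set E) where
  simplices : Finset (Finset E)
  indep : ∀ V ∈ simplices, AffineIndependent ℝ (fun v : (V : Set E) => (v : E))
  faces : ∀ V ∈ simplices, ∀ W ⊆ V, W ∈ simplices
  inter : ∀ V ∈ simplices, ∀ W ∈ simplices, ∃ Z ∈ simplices, Z ⊆ V ∧ Z ⊆ W ∧
    convexHull ℝ (V : Set E) ∩ convexHull ℝ (W : Set E) = convexHull ℝ (Z : Set E)
  covers : (⋃ V ∈ simplices, convexHull ℝ (V : Set E)) = Ω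

/-- `α` is the system of weights of a convex-combination representation of `ω`
with vertex set contained in `V` (weight zero outside `V`). -/
def IsConvexWeight {E : Type*} [AddCommGroup E] [Module ℝ E]
    (V : Finset E) (α : E → ℝ) (ω : E) : Prop :=
  (∀ v, 0 ≤ α v) ∧ (∀ v ∉ V, α v = 0) ∧ (∑ v ∈ V, α v) = 1 ∧ (∑ v ∈ V, α v • v) = ω

/-- `F` is the triangulation-based interpolation `I(f, γ)` (on `Ω`). -/
def IsInterpolation {E : Type*} [AddCommGroup E] [Module ℝ E] {Ω : Set E}
    (γ : Triangulation E Ω) (f F : E → ℝ) : Prop :=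
  ∀ V ∈ γ.simplices, ∀ α : E → ℝ, (∀ v ∈ V, 0 ≤ α v) → (∑ v ∈ V, α v) = 1 →
    F (∑ v ∈ V, α v • v) = ∑ v ∈ V, α v * f v

/-- The concave closure of `f` on `Ω`. -/
noncomputable def cav {E : Type*} [AddCommGroup E] [Module ℝ E]
    (Ω : Set E) (f : E → ℝ) (ω : E) : ℝ :=
  sSup {z : ℝ | (ω, z) ∈ convexHull ℝ {p : E × ℝ | p.1 ∈ Ω ∧ p.2 = f p.1}}



section AuxLemmas
variable {E : Type*} [AddCommGroup E] [Module ℝ E]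


lemma affine_comb (g : E →ᵃ[ℝ] ℝ) (s : Finset E) (w : E → ℝ) (hw : ∑ v ∈ s, w v = 1) :
    g (∑ v ∈ s, w v • v) = ∑ v ∈ s, w v * g v := by
  have h0 : ∀ y : E, g y = g.linear y + g 0 := by
    intro y
    have := g.map_vadd (0 : E) y
    simpa [vadd_eq_add] using this
  rw [h0, map_sum]
  simp only [map_smul, smul_eq_mul]
  have : ∀ v : E, w v * g v = w v * g.linear v + w v * g 0 := by
    intro v; rw [h0 v]; ring
  simp only [this, Finset.sum_add_distrib, ← Finset.sum_mul, hw, one_mul]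

noncomputable def cutPt (g : E →ᵃ[ℝ] ℝ) (c : ℝ) (u v : E) : E :=
  u + ((c - g u) / (g v - g u)) • (v - u)

lemma affine_add_smul (g : E →ᵃ[ℝ] ℝ) (u : E) (t : ℝ) (z : E) :
    g (u + t • z) = g u + t * g.linear z := by
  have := g.map_vadd u (t • z)
  simpa [vadd_eq_add, add_comm] using this

lemma cutPt_val {g : E →ᵃ[ℝ] ℝ} {c : ℝ} {u v : E} (hu : g u ≤ c) (hv : c < g v) :
    g (cutPt g c u v) = c := by
  have hne : g v - g u ≠ 0 := by
    have : g u < g v := lt_of_le_of_lt hu hv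
    intro h; nlinarith
  have hlin : g.linear (v - u) = g v - g u := by
    have := g.linearMap_vsub v u
    simpa [vsub_eq_sub] using this
  rw [cutPt, affine_add_smul, hlin, div_mul_cancel₀ _ hne]
  ring

lemma cutPt_eq (g : E →ᵃ[ℝ] ℝ) (c : ℝ) (u v : E) :
    cutPt g c u v = (1 - (c - g u) / (g v - g u)) • u + ((c - g u) / (g v - g u)) • v := by
  rw [cutPt]; module

/-- Cutting the convex hull of a finite set by a halfspace gives the convex hull
of a finite set. -/
lemma cut_halfspace (F : Finset E) (g : E →ᵃ[ℝ] ℝ) (c : ℝ) :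
    ∃ F' : Finset E,
      convexHull ℝ (F : Set E) ∩ {y | g y ≤ c} = convexHull ℝ (F' : Set E) := by
  classical
  set A := F.filter (fun y => g y ≤ c) with hA
  set B := F.filter (fun y => ¬ g y ≤ c) with hB
  set F' := A ∪ (A ×ˢ B).image (fun q => cutPt g c q.1 q.2) with hF'
  have hAF : A ⊆ F := Finset.filter_subset _ _
  have hBF : B ⊆ F := Finset.filter_subset _ _
  have hAF' : A ⊆ F' := Finset.subset_union_left
  -- every element of F' satisfies g ≤ c and lies in conv F
  have hF'le : ∀ y ∈ F', g y ≤ c := by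
    intro y hy
    rcases Finset.mem_union.1 hy with hy | hy
    · exact (Finset.mem_filter.1 hy).2
    · obtain ⟨⟨u, v⟩, hq, rfl⟩ := Finset.mem_image.1 hy
      rw [Finset.mem_product] at hq
      have hu := (Finset.mem_filter.1 hq.1).2
      have hv := (Finset.mem_filter.1 hq.2).2
      rw [cutPt_val hu (lt_of_not_ge hv)]
  have hF'conv : (F' : Set E) ⊆ convexHull ℝ (F : Set E) := by
    intro y hy
    rcases Finset.mem_union.1 (Finset.mem_coe.1 hy) with hy | hy
    · exact subset_convexHull ℝ _ (hAF hy)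
    · obtain ⟨⟨u, v⟩, hq, rfl⟩ := Finset.mem_image.1 hy
      rw [Finset.mem_product] at hq
      have hu := (Finset.mem_filter.1 hq.1).2
      have hv := lt_of_not_ge (Finset.mem_filter.1 hq.2).2
      have hgt : g u < g v := lt_of_le_of_lt hu hv
      have ht : (c - g u) / (g v - g u) ∈ Set.Icc (0:ℝ) 1 := by
        constructor
        · exact div_nonneg (by linarith) (by linarith)
        · rw [div_le_one (by linarith)]; linarith
      exact (convex_convexHull ℝ _).add_smul_sub_mem
        (subset_convexHull ℝ _ (hAF hq.1)) (subset_convexHull ℝ _ (hBF hq.2)) ht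
  refine ⟨F', Set.Subset.antisymm ?_ ?_⟩; swap
  · -- easy direction
    exact convexHull_min (fun y hy => ⟨hF'conv hy, hF'le y (Finset.mem_coe.1 hy)⟩)
      ((convex_convexHull ℝ _).inter ((convex_Iic c).affine_preimage g))
  · -- hard direction
    set G := F ∪ F' with hG
    have hFG : F ⊆ G := Finset.subset_union_left
    have hF'G : F' ⊆ G := Finset.subset_union_right
    -- facts about elements of G
    have factV : ∀ v ∈ G, ¬ g v ≤ c → v ∈ B := by
      intro v hv hvc
      rcases Finset.mem_union.1 hv with hv | hv
      · exact Finset.mem_filter.2 ⟨hv, hvc⟩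
      · exact absurd (hF'le v hv) hvc
    have factU : ∀ u ∈ G, g u < c → u ∈ A := by
      intro u hu huc
      rcases Finset.mem_union.1 hu with hu | hu
      · exact Finset.mem_filter.2 ⟨hu, le_of_lt huc⟩
      · rcases Finset.mem_union.1 hu with hu | hu
        · exact hu
        · obtain ⟨⟨a, b⟩, hq, rfl⟩ := Finset.mem_image.1 hu
          rw [Finset.mem_product] at hq
          have := cutPt_val (Finset.mem_filter.1 hq.1).2
            (lt_of_not_ge (Finset.mem_filter.1 hq.2).2)
          exact absurd this (by simpa using ne_of_lt huc)
    rintro x ⟨hxF, hxc⟩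
    rw [Set.mem_setOf_eq] at hxc
    have hxG : x ∈ convexHull ℝ (G : Set E) :=
      convexHull_mono (by exact_mod_cast hFG) hxF
    obtain ⟨w, hw0, hw1, hwx⟩ := Finset.mem_convexHull'.1 hxG
    -- termination-style finisher
    have finish : ∀ w : E → ℝ, (∀ y ∈ G, 0 ≤ w y) → (∑ y ∈ G, w y) = 1 →
        (∑ y ∈ G, w y • y) = x → (∀ y ∈ G, w y ≠ 0 → g y ≤ c) →
        x ∈ convexHull ℝ (F' : Set E) := by
      intro w hw0 hw1 hwx hsupp
      have hzero : ∀ y ∈ G, y ∉ F' → w y = 0 := by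
        intro y hyG hyF'
        by_contra hy0
        have hyc := hsupp y hyG hy0
        rcases Finset.mem_union.1 hyG with hy | hy
        · exact hyF' (hAF' (Finset.mem_filter.2 ⟨hy, hyc⟩))
        · exact hyF' hy
      rw [Finset.mem_convexHull']
      refine ⟨w, fun y hy => hw0 y (hF'G hy), ?_, ?_⟩
      · rw [← hw1]
        exact (Finset.sum_subset hF'G (fun y hy hy' => hzero y hy hy')).symm ▸ rfl
      · rw [← hwx]
        exact Finset.sum_subset hF'G (fun y hy hy' => by rw [hzero y hy hy', zero_smul])
    -- main induction
    have key : ∀ n : ℕ, ∀ w : E → ℝ, (∀ y ∈ G, 0 ≤ w y) → (∑ y ∈ G, w y) = 1 →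
        (∑ y ∈ G, w y • y) = x →
        (G.filter (fun y => w y ≠ 0 ∧ g y ≠ c)).card ≤ n →
        x ∈ convexHull ℝ (F' : Set E) := by
      intro n
      induction n with
      | zero =>
        intro w hw0 hw1 hwx hcard
        refine finish w hw0 hw1 hwx ?_
        intro y hy hy0
        by_contra hyc
        have : y ∈ G.filter (fun y => w y ≠ 0 ∧ g y ≠ c) :=
          Finset.mem_filter.2 ⟨hy, hy0, fun h => hyc (le_of_eq h)⟩
        simp [Finset.card_eq_zero.1 (Nat.le_zero.1 hcard)] at this
      | succ n ih =>
        intro w hw0 hw1 hwx hcard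
        by_cases hsupp : ∀ y ∈ G, w y ≠ 0 → g y ≤ c
        · exact finish w hw0 hw1 hwx hsupp
        push_neg at hsupp
        obtain ⟨v, hvG, hv0, hvgt⟩ := hsupp
        have hvc : ¬ g v ≤ c := not_le.2 hvgt
        have hvpos : 0 < w v := lt_of_le_of_ne (hw0 v hvG) (Ne.symm hv0)
        -- find u with g u < c in the support
        have hgx : g x = ∑ y ∈ G, w y * g y := by rw [← hwx]; exact affine_comb g G w hw1
        have hexu : ∃ u ∈ G, w u ≠ 0 ∧ g u < c := by
          by_contra hno
          push_neg at hno
          have hpos : (0:ℝ) < ∑ y ∈ G, w y * (g y - c) := by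
            refine Finset.sum_pos' ?_ ⟨v, hvG, ?_⟩
            · intro y hy
              rcases eq_or_ne (w y) 0 with h | h
              · simp [h]
              · exact mul_nonneg (hw0 y hy) (by linarith [hno y hy h])
            · exact mul_pos hvpos (by linarith)
          have hid : ∑ y ∈ G, w y * (g y - c) = (∑ y ∈ G, w y * g y) - c := by
            simp only [mul_sub, Finset.sum_sub_distrib, ← Finset.sum_mul, hw1, one_mul]
          rw [hid, ← hgx] at hpos
          linarith
        obtain ⟨u, huG, hu0, hult⟩ := hexu
        have hupos : 0 < w u := lt_of_le_of_ne (hw0 u huG) (Ne.symm hu0)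
        have huA : u ∈ A := factU u huG hult
        have hvB : v ∈ B := factV v hvG hvc
        set s : ℝ := (c - g u) / (g v - g u) with hs
        have hgultv : g u < g v := lt_trans hult hvgt
        have hs0 : 0 < s := div_pos (by linarith) (by linarith)
        have hs1 : s < 1 := by
          rw [hs, div_lt_one (by linarith)]; linarith
        set p : E := cutPt g c u v with hp
        have hpF' : p ∈ F' := by
          refine Finset.mem_union_right _ (Finset.mem_image.2 ⟨(u, v), ?_, rfl⟩)
          exact Finset.mem_product.2 ⟨huA, hvB⟩
        have hpG : p ∈ G := hF'G hpF'
        have hgp : g p = c := cutPt_val (le_of_lt hult) hvgt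
        have hpu : p ≠ u := fun h => by rw [h] at hgp; exact absurd hgp (ne_of_lt hult)
        have hpv : p ≠ v := fun h => by rw [h] at hgp; exact absurd hgp (ne_of_gt hvgt)
        have huv : u ≠ v := fun h => by rw [h] at hult; linarith
        have hpeq : p = (1 - s) • u + s • v := cutPt_eq g c u v
        set t : ℝ := min (w u / (1 - s)) (w v / s) with htdef
        have ht0 : 0 < t := lt_min (div_pos hupos (by linarith)) (div_pos hvpos hs0)
        have htu : t * (1 - s) ≤ w u := by
          have := min_le_left (w u / (1 - s)) (w v / s)
          calc t * (1 - s) ≤ (w u / (1 - s)) * (1 - s) := by nlinarith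
          _ = w u := div_mul_cancel₀ _ (by linarith)
        have htv : t * s ≤ w v := by
          have := min_le_right (w u / (1 - s)) (w v / s)
          calc t * s ≤ (w v / s) * s := by nlinarith
          _ = w v := div_mul_cancel₀ _ (by linarith)
        classical
        set w' : E → ℝ := fun y =>
          w y + (if y = p then t else 0) - (if y = u then t * (1 - s) else 0)
            - (if y = v then t * s else 0) with hw'
        have hw'p : w' p = w p + t := by simp [hw', hpu, hpv]
        have hw'u : w' u = w u - t * (1 - s) := by simp [hw', Ne.symm hpu, huv]
        have hw'v : w' v = w v - t * s := by simp [hw', Ne.symm hpv, Ne.symm huv]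
        have hw'other : ∀ y, y ≠ p → y ≠ u → y ≠ v → w' y = w y := by
          intro y h1 h2 h3; simp [hw', h1, h2, h3]
        have hw'0 : ∀ y ∈ G, 0 ≤ w' y := by
          intro y hy
          rcases eq_or_ne y p with rfl | h1
          · rw [hw'p]; have := hw0 p hpG; linarith
          rcases eq_or_ne y u with rfl | h2
          · rw [hw'u]; linarith
          rcases eq_or_ne y v with rfl | h3
          · rw [hw'v]; linarith
          · rw [hw'other y h1 h2 h3]; exact hw0 y hy
        have hsum_ite : ∀ (a : E) (r : ℝ), a ∈ G →
            (∑ y ∈ G, if y = a then r else 0) = r := by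
          intro a r ha
          rw [Finset.sum_ite_eq' G a (fun _ => r), if_pos ha]
        have hw'1 : (∑ y ∈ G, w' y) = 1 := by
          simp only [hw']
          rw [Finset.sum_sub_distrib, Finset.sum_sub_distrib, Finset.sum_add_distrib,
            hsum_ite p t hpG, hsum_ite u _ huG, hsum_ite v _ hvG, hw1]
          ring
        have hsum_ite_smul : ∀ (a : E) (r : ℝ), a ∈ G →
            (∑ y ∈ G, (if y = a then r else 0) • y) = r • a := by
          intro a r ha
          have : ∀ y : E, (if y = a then r else 0) • y = if y = a then r • y else 0 := by
            intro y; split <;> simp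
          rw [Finset.sum_congr rfl (fun y _ => this y),
            Finset.sum_ite_eq' G a (fun y => r • y), if_pos ha]
        have hw'x : (∑ y ∈ G, w' y • y) = x := by
          simp only [hw', sub_smul, add_smul]
          rw [Finset.sum_sub_distrib, Finset.sum_sub_distrib, Finset.sum_add_distrib,
            hsum_ite_smul p t hpG, hsum_ite_smul u _ huG, hsum_ite_smul v _ hvG, hwx]
          rw [hpeq]
          module
        have hcard' : (G.filter (fun y => w' y ≠ 0 ∧ g y ≠ c)).card ≤ n := by
          have hsub : G.filter (fun y => w' y ≠ 0 ∧ g y ≠ c) ⊆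
              G.filter (fun y => w y ≠ 0 ∧ g y ≠ c) := by
            intro y hy
            obtain ⟨hyG, hy0, hyc⟩ := Finset.mem_filter.1 hy
            refine Finset.mem_filter.2 ⟨hyG, ?_, hyc⟩
            have h1 : y ≠ p := fun h => hyc (h ▸ hgp)
            rcases eq_or_ne y u with rfl | h2
            · exact hu0
            rcases eq_or_ne y v with rfl | h3
            · exact hv0
            · rwa [hw'other y h1 h2 h3] at hy0
          have hne : ∃ z, z ∈ G.filter (fun y => w y ≠ 0 ∧ g y ≠ c) ∧
              z ∉ G.filter (fun y => w' y ≠ 0 ∧ g y ≠ c) := by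
            rcases le_total (w u / (1 - s)) (w v / s) with h | h
            · refine ⟨u, Finset.mem_filter.2 ⟨huG, hu0, ne_of_lt hult⟩, ?_⟩
              have : w' u = 0 := by
                rw [hw'u, htdef, min_eq_left h, div_mul_cancel₀ _ (by linarith : (1:ℝ) - s ≠ 0)]
                ring
              intro hmem
              exact (Finset.mem_filter.1 hmem).2.1 this
            · refine ⟨v, Finset.mem_filter.2 ⟨hvG, hv0, (ne_of_gt hvgt)⟩, ?_⟩
              have : w' v = 0 := by
                rw [hw'v, htdef, min_eq_right h, div_mul_cancel₀ _ (ne_of_gt hs0)]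
                ring
              intro hmem
              exact (Finset.mem_filter.1 hmem).2.1 this
          obtain ⟨z, hz1, hz2⟩ := hne
          have : (G.filter (fun y => w' y ≠ 0 ∧ g y ≠ c)).card <
              (G.filter (fun y => w y ≠ 0 ∧ g y ≠ c)).card :=
            Finset.card_lt_card ((Finset.ssubset_iff_of_subset hsub).2 ⟨z, hz1, hz2⟩)
          omega
        exact ih w' hw'0 hw'1 hw'x hcard'
    exact key _ w hw0 hw1 hwx le_rfl


lemma IsPolytope.inter_halfspace {S : Set E} (hS : IsPolytope S) (g : E →ᵃ[ℝ] ℝ) (c : ℝ) :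
    IsPolytope (S ∩ {y | g y ≤ c}) := by
  obtain ⟨F, rfl⟩ := hS
  obtain ⟨F', h⟩ := cut_halfspace F g c
  exact ⟨F', h⟩

lemma IsPolytope.inter_halfspaces {S : Set E} (hS : IsPolytope S) : ∀ {n : ℕ}
    (g : Fin n → (E →ᵃ[ℝ] ℝ)) (c : Fin n → ℝ),
    IsPolytope (S ∩ {y | ∀ i, g i y ≤ c i})
  | 0, g, c => by
    have h : {y : E | ∀ i : Fin 0, g i y ≤ c i} = Set.univ := by
      ext y; simp
    rw [h, Set.inter_univ]; exact hS
  | n + 1, g, c => by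
    have h : S ∩ {y | ∀ i, g i y ≤ c i} =
        (S ∩ {y | ∀ i : Fin n, g i.succ y ≤ c i.succ}) ∩ {y | g 0 y ≤ c 0} := by
      ext y
      simp only [Set.mem_inter_iff, Set.mem_setOf_eq, Fin.forall_fin_succ]
      tauto
    rw [h]
    exact (hS.inter_halfspaces _ _).inter_halfspace _ _


end AuxLemmas

lemma IsPolytope.inter {d : ℕ} {S T : Set (Fin d → ℝ)} (hS : IsPolytope S)
    (hT : IsPolytope T) : IsPolytope (S ∩ T) := by
  classical
  obtain ⟨F₁, rfl⟩ := hS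
  obtain ⟨F₂, rfl⟩ := hT
  set l : Fin d → ((Fin d → ℝ) × (Fin d → ℝ)) →ₗ[ℝ] ℝ := fun i =>
    (LinearMap.proj i).comp (LinearMap.fst ℝ _ _)
      - (LinearMap.proj i).comp (LinearMap.snd ℝ _ _) with hl
  have hprod : IsPolytope
      ((convexHull ℝ (F₁ : Set (Fin d → ℝ))) ×ˢ (convexHull ℝ (F₂ : Set (Fin d → ℝ)))) :=
    ⟨F₁ ×ˢ F₂, by rw [Finset.coe_product, convexHull_prod]⟩
  have h2 := (hprod.inter_halfspaces (fun i => (l i).toAffineMap) (fun _ => 0)).inter_halfspaces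
    (fun i => (-(l i)).toAffineMap) (fun _ => 0)
  obtain ⟨F', hF'⟩ := h2
  refine ⟨F'.image Prod.fst, ?_⟩
  have hval : ∀ (i : Fin d) (q : (Fin d → ℝ) × (Fin d → ℝ)), l i q = q.1 i - q.2 i := by
    intro i q; simp [hl]
  have hset : convexHull ℝ (F₁ : Set (Fin d → ℝ)) ∩ convexHull ℝ (F₂ : Set (Fin d → ℝ)) =
      Prod.fst '' (((convexHull ℝ (F₁ : Set (Fin d → ℝ))) ×ˢ
        (convexHull ℝ (F₂ : Set (Fin d → ℝ))) ∩ {q | ∀ i, (l i).toAffineMap q ≤ 0})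
        ∩ {q | ∀ i, (-(l i)).toAffineMap q ≤ 0}) := by
    ext x
    constructor
    · rintro ⟨h1, h2⟩
      refine ⟨(x, x), ⟨⟨⟨h1, h2⟩, ?_⟩, ?_⟩, rfl⟩ <;>
        · intro i; simp [hval]
    · rintro ⟨⟨a, b⟩, ⟨⟨⟨h1, h2⟩, hle⟩, hge⟩, rfl⟩
      have hab : a = b := by
        funext i
        have hi1 := hle i
        have hi2 := hge i
        simp only [LinearMap.coe_toAffineMap, hval] at hi1
        simp only [LinearMap.coe_toAffineMap, LinearMap.neg_apply, hval] at hi2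
        linarith
      exact ⟨h1, hab ▸ h2⟩
  rw [hset, hF', Finset.coe_image]
  have := AffineMap.image_convexHull
    (f := (LinearMap.fst ℝ (Fin d → ℝ) (Fin d → ℝ)).toAffineMap) (s := (F' : Set _))
  simpa using this

lemma IsPolytope.inter_iInter {d : ℕ} {S : Set (Fin d → ℝ)} (hS : IsPolytope S) :
    ∀ {n : ℕ} (T : Fin n → Set (Fin d → ℝ)), (∀ i, IsPolytope (T i)) →
    IsPolytope (S ∩ ⋂ i, T i)
  | 0, T, hT => by
    have h : (⋂ i : Fin 0, T i) = Set.univ := by ext y; simp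
    rw [h, Set.inter_univ]; exact hS
  | n + 1, T, hT => by
    have h : S ∩ ⋂ i, T i = (S ∩ T 0) ∩ ⋂ i : Fin n, T i.succ := by
      ext y
      simp only [Set.mem_inter_iff, Set.mem_iInter, Fin.forall_fin_succ]
      tauto
    rw [h]
    exact ((hS.inter (hT 0)).inter_iInter _ (fun i => hT i.succ))


/-- There is a finite set `P ⊆ Ω` such that, for every `ω ∈ Ω`, the fiber over `ω` of the
convex hull of `{(p, Ψ(p)) : p ∈ P}` is nonempty and its maximum equals `cav(Ψ)(ω)`. -/
theorem cav_eq_max_over_finite_hull {d k : ℕ} (hk : 0 < k) (Ω : Set (Fin d → ℝ))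
    (hΩ : IsPolytope Ω) (f ρ : Fin k → (Fin d → ℝ) → ℝ)
    (hf : ∀ j, IsPWLOn Ω (f j) ∧ ContinuousOn (f j) Ω)
    (hρ : ∀ j, IsPWLOn Ω (ρ j) ∧ ContinuousOn (ρ j) Ω)
    (Ψ : (Fin d → ℝ) → ℝ)
    (hΨ : ∀ ω ∈ Ω,
      IsGreatest {y : ℝ | ∃ j, (∀ j', f j' ω ≤ f j ω) ∧ y = ρ j ω} (Ψ ω)) :
    ∃ P : Finset (Fin d → ℝ), (P : Set (Fin d → ℝ)) ⊆ Ω ∧ ∀ ω ∈ Ω,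
      IsGreatest {y : ℝ | (ω, y) ∈
        convexHull ℝ ((fun p => (p, Ψ p)) '' (P : Set (Fin d → ℝ)))} (cav Ω Ψ ω) := by
  classical
  -- choose the pieces and affine representatives
  have hf' : ∀ j, IsPWLOn Ω (f j) := fun j => (hf j).1
  have hρ' : ∀ j, IsPWLOn Ω (ρ j) := fun j => (hρ j).1
  choose kf Cf hCfpoly hCfcov hCfrep using hf'
  choose gf hgf using hCfrep
  choose kρ Cρ hCρpoly hCρcov hCρrep using hρ'
  choose gρ hgρ using hCρrep
  -- the cells
  set Cell : (Σ j : Fin k, Fin (kρ j) × (∀ j' : Fin k, Fin (kf j'))) → Set (Fin d → ℝ) :=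
    fun t => ((Ω ∩ Cρ t.1 t.2.1) ∩ ⋂ j', Cf j' (t.2.2 j')) ∩
      {y | ∀ j', (gf j' (t.2.2 j') - gf t.1 (t.2.2 t.1)) y ≤ (fun _ : Fin k => (0:ℝ)) j'}
    with hCell
  have hCellpoly : ∀ t, IsPolytope (Cell t) := by
    intro t
    exact (((hΩ.inter (hCρpoly t.1 t.2.1)).inter_iInter _
      (fun j' => hCfpoly j' (t.2.2 j'))).inter_halfspaces
      (fun j' => gf j' (t.2.2 j') - gf t.1 (t.2.2 t.1)) (fun _ => 0))
  choose Gen hGen using fun t => hCellpoly t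
  set P : Finset (Fin d → ℝ) := Finset.univ.biUnion Gen with hP
  have hGenP : ∀ t, Gen t ⊆ P := fun t => Finset.subset_biUnion_of_mem Gen (Finset.mem_univ t)
  have hCellΩ : ∀ t, Cell t ⊆ Ω := fun t y hy => hy.1.1.1
  have hGenCell : ∀ t, ∀ v ∈ Gen t, v ∈ Cell t := by
    intro t v hv
    rw [hGen t]
    exact subset_convexHull ℝ _ hv
  have hPΩ : (P : Set (Fin d → ℝ)) ⊆ Ω := by
    intro p hp
    obtain ⟨t, _, ht⟩ := Finset.mem_biUnion.1 (Finset.mem_coe.1 hp)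
    exact hCellΩ t (hGenCell t p ht)
  -- argmax property on cells
  have hargmax : ∀ t, ∀ v ∈ Cell t, ∀ j', f j' v ≤ f t.1 v := by
    intro t v hv j'
    have h1 : v ∈ Cf j' (t.2.2 j') := Set.mem_iInter.1 hv.1.2 j'
    have h2 : v ∈ Cf t.1 (t.2.2 t.1) := Set.mem_iInter.1 hv.1.2 t.1
    have h3 := hv.2 j'
    simp only [AffineMap.coe_sub, Pi.sub_apply] at h3
    rw [hgf j' _ v h1, hgf t.1 _ v h2]
    linarith
  have hρcell : ∀ t, ∀ v ∈ Cell t, ρ t.1 v ≤ Ψ v := fun t v hv =>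
    (hΨ v (hCellΩ t hv)).2 ⟨t.1, fun j' => hargmax t v hv j', rfl⟩
  -- the cells cover Ω
  have hcover : ∀ x ∈ Ω, ∃ t, x ∈ Cell t ∧ Ψ x = ρ t.1 x := by
    intro x hx
    obtain ⟨j, hjmax, hjval⟩ := (hΨ x hx).1
    obtain ⟨iρ, hiρ⟩ := Set.mem_iUnion.1 ((hCρcov j) ▸ hx : x ∈ ⋃ i, Cρ j i)
    have hiF : ∀ j', ∃ i, x ∈ Cf j' i :=
      fun j' => Set.mem_iUnion.1 ((hCfcov j') ▸ hx : x ∈ ⋃ i, Cf j' i)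
    choose iF hiF using hiF
    refine ⟨⟨j, iρ, iF⟩, ⟨⟨⟨hx, hiρ⟩, Set.mem_iInter.2 hiF⟩, ?_⟩, hjval⟩
    intro j'
    simp only [AffineMap.coe_sub, Pi.sub_apply]
    rw [← hgf j' (iF j') x (hiF j'), ← hgf j (iF j) x (hiF j)]
    linarith [hjmax j']
  -- key pointwise estimate
  have hkey : ∀ x ∈ Ω, ∃ w : (Fin d → ℝ) → ℝ, (∀ v ∈ P, 0 ≤ w v) ∧
      (∑ v ∈ P, w v) = 1 ∧ (∑ v ∈ P, w v • v) = x ∧ Ψ x ≤ ∑ v ∈ P, w v * Ψ v := by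
    intro x hx
    obtain ⟨t, hxt, hΨx⟩ := hcover x hx
    have hxconv : x ∈ convexHull ℝ (Gen t : Set (Fin d → ℝ)) := (hGen t) ▸ hxt
    obtain ⟨w, hw0, hw1, hwx⟩ := Finset.mem_convexHull'.1 hxconv
    set w' : (Fin d → ℝ) → ℝ := fun v => if v ∈ Gen t then w v else 0 with hw'
    have hs1 : ∀ u : (Fin d → ℝ) → ℝ, (∑ v ∈ P, w' v • u v) = ∑ v ∈ Gen t, w v • u v := by
      intro u
      rw [← Finset.sum_subset (hGenP t) (fun v _ hv => by simp [hw', hv])]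
      exact Finset.sum_congr rfl (fun v hv => by simp [hw', hv])
    have hsum1 : (∑ v ∈ P, w' v) = 1 := by
      have := hs1 (fun _ => (1:ℝ))
      simpa [hw1] using this
    have hsumx : (∑ v ∈ P, w' v • v) = x := by
      rw [← Finset.sum_subset (hGenP t) (fun v _ hv => by simp [hw', hv])]
      rw [← hwx]
      exact Finset.sum_congr rfl (fun v hv => by simp [hw', hv])
    refine ⟨w', fun v _ => by by_cases h : v ∈ Gen t <;> simp [hw', h, hw0 v] , hsum1, hsumx, ?_⟩
    have hxρ : x ∈ Cρ t.1 t.2.1 := hxt.1.1.2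
    have hchain : Ψ x = ∑ v ∈ Gen t, w v * gρ t.1 t.2.1 v := by
      rw [hΨx, hgρ t.1 t.2.1 x hxρ, ← hwx, affine_comb _ _ _ hw1]
    have hle : ∑ v ∈ Gen t, w v * gρ t.1 t.2.1 v ≤ ∑ v ∈ Gen t, w v * Ψ v := by
      refine Finset.sum_le_sum (fun v hv => ?_)
      have hvCell := hGenCell t v hv
      have hvρ : v ∈ Cρ t.1 t.2.1 := hvCell.1.1.2
      rw [← hgρ t.1 t.2.1 v hvρ]
      exact mul_le_mul_of_nonneg_left (le_trans (hρcell t v hvCell) le_rfl) (hw0 v hv)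
    have hfin : (∑ v ∈ P, w' v * Ψ v) = ∑ v ∈ Gen t, w v * Ψ v := by
      have := hs1 Ψ
      simpa [smul_eq_mul] using this
    rw [hfin, hchain]
    exact hle
  -- the convex hull of the graph over P
  set D : Set ((Fin d → ℝ) × ℝ) :=
    convexHull ℝ ((fun p => (p, Ψ p)) '' (P : Set (Fin d → ℝ))) with hD
  have hDkey : ∀ x ∈ Ω, ∃ y, (x, y) ∈ D ∧ Ψ x ≤ y := by
    intro x hx
    obtain ⟨w, hw0, hw1, hwx, hwΨ⟩ := hkey x hx
    refine ⟨∑ v ∈ P, w v * Ψ v, ?_, hwΨ⟩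
    have hmem : (∑ v ∈ P, w v • ((v, Ψ v) : (Fin d → ℝ) × ℝ)) ∈ D := by
      rw [hD, ← Finset.centerMass_eq_of_sum_1 _ _ hw1]
      exact Finset.centerMass_mem_convexHull P hw0 (hw1 ▸ one_pos)
        (fun v hv => ⟨v, Finset.mem_coe.2 hv, rfl⟩)
    have heq : (∑ v ∈ P, w v • ((v, Ψ v) : (Fin d → ℝ) × ℝ)) = (x, ∑ v ∈ P, w v * Ψ v) := by
      refine Prod.ext ?_ ?_
      · rw [Prod.fst_sum]
        simpa using hwx
      · rw [Prod.snd_sum]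
        simp [smul_eq_mul]
    rwa [heq] at hmem
  refine ⟨P, hPΩ, ?_⟩
  intro ω hω
  set S : Set ℝ := {y : ℝ | (ω, y) ∈ D} with hS
  have hSne : S.Nonempty := by
    obtain ⟨y, hy, _⟩ := hDkey ω hω
    exact ⟨y, hy⟩
  have hDcpt : IsCompact D :=
    Set.Finite.isCompact_convexHull (𝕜 := ℝ) ((P.finite_toSet).image _)
  have hScl : IsClosed S := hDcpt.isClosed.preimage (Continuous.prodMk_right ω)
  have hSsub : S ⊆ Prod.snd '' D := fun y hy => ⟨(ω, y), hy, rfl⟩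
  have hSbdd : BddAbove S :=
    BddAbove.mono hSsub (hDcpt.image continuous_snd).bddAbove
  have hM : IsGreatest S (sSup S) :=
    ⟨hScl.csSup_mem hSne hSbdd, fun z hz => le_csSup hSbdd hz⟩
  set Gr : Set ((Fin d → ℝ) × ℝ) := {p | p.1 ∈ Ω ∧ p.2 = Ψ p.1} with hGr
  have hDGr : D ⊆ convexHull ℝ Gr := by
    rw [hD]
    refine convexHull_mono ?_
    rintro q ⟨p, hp, rfl⟩
    exact ⟨hPΩ hp, rfl⟩
  set K : Set ((Fin d → ℝ) × ℝ) := {q | ∃ y, (q.1, y) ∈ D ∧ q.2 ≤ y} with hK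
  have hKconv : Convex ℝ K := by
    rintro q₁ ⟨y₁, hy₁, hq₁⟩ q₂ ⟨y₂, hy₂, hq₂⟩ a b ha hb hab
    refine ⟨a * y₁ + b * y₂, ?_, ?_⟩
    · have := convex_convexHull ℝ ((fun p => (p, Ψ p)) '' (P : Set (Fin d → ℝ))) hy₁ hy₂ ha hb hab
      have heq : a • ((q₁.1, y₁) : (Fin d → ℝ) × ℝ) + b • (q₂.1, y₂) =
          ((a • q₁ + b • q₂).1, a * y₁ + b * y₂) := by
        refine Prod.ext ?_ ?_ <;> simp [smul_eq_mul]
      rw [← heq]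
      exact this
    · have : (a • q₁ + b • q₂).2 = a * q₁.2 + b * q₂.2 := by simp [smul_eq_mul]
      rw [this]
      have h1 : a * q₁.2 ≤ a * y₁ := mul_le_mul_of_nonneg_left hq₁ ha
      have h2 : b * q₂.2 ≤ b * y₂ := mul_le_mul_of_nonneg_left hq₂ hb
      linarith
  have hGrK : Gr ⊆ K := by
    rintro ⟨x, z⟩ ⟨hx, hz⟩
    obtain ⟨y, hy1, hy2⟩ := hDkey x hx
    exact ⟨y, hy1, by rw [hz]; exact hy2⟩
  have hHullK : convexHull ℝ Gr ⊆ K := convexHull_min hGrK hKconv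
  set T : Set ℝ := {z : ℝ | (ω, z) ∈ convexHull ℝ Gr} with hT
  have hST : S ⊆ T := fun y hy => hDGr hy
  have hTub : ∀ z ∈ T, z ≤ sSup S := by
    intro z hz
    obtain ⟨y, hy1, hy2⟩ := hHullK hz
    exact le_trans hy2 (hM.2 hy1)
  have hcav : cav Ω Ψ ω = sSup S := by
    have h1 : sSup T ≤ sSup S := csSup_le (hSne.mono hST) hTub
    have h2 : sSup S ≤ sSup T := csSup_le_csSup ⟨sSup S, fun z hz => hTub z hz⟩ hSne hST
    rw [cav]
    exact le_antisymm h1 h2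
  rw [hcav]
  exact hM
end

section
/- Let Z ⊆ ℝ^d × ℝ be a polytope, let Ω = {ω ∈ ℝ^d : (ω, y) ∈ Z for some y} be its projection (a polytope), and define f : Ω → ℝ by f(ω) = max{y : (ω, y) ∈ Z}. Then f is a concave continuous piecewise linear function, and there exists a triangulation γ of Ω such that f = I(f, γ) and every vertex v of every simplex of γ satisfies that (v, f(v)) is a vertex (extreme point) of Z. -/
open Finset

section AuxLemmas


variable {E : Type*} [NormedAddCommGroup E] [NormedSpace ℝ E]

/-- The convex cone generated by a finite family of vectors. -/
def coneOf {ι : Type*} [Fintype ι] (g : ι → E) : Set E :=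
  {z | ∃ c : ι → ℝ, (∀ i, 0 ≤ c i) ∧ ∑ i, c i • g i = z}

lemma coneOf_mem_iff {ι : Type*} [Fintype ι] (g : ι → E) (z : E) :
    z ∈ coneOf g ↔ ∃ c : ι → ℝ, (∀ i, 0 ≤ c i) ∧ ∑ i, c i • g i = z := Iff.rfl

lemma zero_mem_coneOf {ι : Type*} [Fintype ι] (g : ι → E) : (0 : E) ∈ coneOf g :=
  ⟨0, fun _ => le_refl 0, by simp⟩

lemma smul_mem_coneOf {ι : Type*} [Fintype ι] {g : ι → E} {z : E} (hz : z ∈ coneOf g)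
    {t : ℝ} (ht : 0 ≤ t) : t • z ∈ coneOf g := by
  obtain ⟨c, hc, rfl⟩ := hz
  refine ⟨fun i => t * c i, fun i => mul_nonneg ht (hc i), ?_⟩
  rw [Finset.smul_sum]
  exact Finset.sum_congr rfl fun i _ => (smul_smul t (c i) (g i)).symm

lemma mem_coneOf {ι : Type*} [Fintype ι] (g : ι → E) (i : ι) : g i ∈ coneOf g := by
  classical
  refine ⟨fun j => if j = i then 1 else 0, fun j => by dsimp only; split <;> norm_num, ?_⟩
  rw [Finset.sum_eq_single i]
  · simp
  · intro b _ hb; simp [hb]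
  · intro h; exact absurd (Finset.mem_univ i) h

lemma convex_coneOf {ι : Type*} [Fintype ι] (g : ι → E) : Convex ℝ (coneOf g) := by
  rintro z ⟨c, hc, rfl⟩ z' ⟨c', hc', rfl⟩ a b ha hb _
  refine ⟨fun i => a * c i + b * c' i, fun i => add_nonneg (mul_nonneg ha (hc i)) (mul_nonneg hb (hc' i)), ?_⟩
  rw [Finset.smul_sum, Finset.smul_sum, ← Finset.sum_add_distrib]
  refine Finset.sum_congr rfl fun i _ => ?_
  rw [add_smul, smul_smul, smul_smul]



variable {E : Type*} [NormedAddCommGroup E] [NormedSpace ℝ E]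

lemma cara_aux {ι : Type*} [Fintype ι] [DecidableEq ι] (g : ι → E) :
    ∀ (n : ℕ) (c : ι → ℝ), (univ.filter fun i => c i ≠ 0).card ≤ n → (∀ i, 0 ≤ c i) →
    ∃ t : Finset ι, (LinearIndependent ℝ (fun i : t => g i)) ∧
      ∃ c' : ι → ℝ, (∀ i, 0 ≤ c' i) ∧ (∀ i ∉ t, c' i = 0) ∧
        ∑ i, c' i • g i = ∑ i, c i • g i := by
  intro n
  induction n with
  | zero =>
    intro c hcard hpos
    have hc0 : ∀ i, c i = 0 := by
      intro i
      by_contra h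
      have hi : i ∈ univ.filter fun i => c i ≠ 0 := by simp [h]
      have := Finset.card_pos.2 ⟨i, hi⟩
      omega
    refine ⟨∅, ?_, c, hpos, fun i _ => hc0 i, rfl⟩
    haveI : IsEmpty {x // x ∈ (∅ : Finset ι)} := ⟨fun x => (Finset.notMem_empty _ x.2)⟩
    exact linearIndependent_empty_type
  | succ n ih =>
    intro c hcard hpos
    set s : Finset ι := univ.filter (fun i => c i ≠ 0) with hs
    by_cases hli : LinearIndependent ℝ (fun i : s => g i)
    · refine ⟨s, hli, c, hpos, fun i hi => ?_, rfl⟩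
      by_contra h
      exact hi (by simp [hs, h])
    · obtain ⟨lam, hlamsum, j0, hj0⟩ := Fintype.not_linearIndependent_iff.1 hli
      -- extend lam to ι
      set Λ₀ : ι → ℝ := fun i => if h : i ∈ s then lam ⟨i, h⟩ else 0 with hΛ₀
      have hsupp₀ : ∀ i, Λ₀ i ≠ 0 → i ∈ s := by
        intro i hi
        by_contra h
        exact hi (by simp [hΛ₀, h])
      have hΛ₀sum : ∑ i, Λ₀ i • g i = 0 := by
        rw [← Finset.sum_subset (Finset.subset_univ s)
          (fun i _ hi => by rw [hΛ₀]; simp [hi])]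
        rw [← Finset.sum_attach s (fun i => Λ₀ i • g i)]
        rw [← hlamsum]
        refine Finset.sum_congr rfl fun i _ => ?_
        simp [hΛ₀, i.2]
      have hΛ₀ne : Λ₀ ≠ 0 := by
        intro h
        apply hj0
        have := congrFun h j0
        simpa [hΛ₀, j0.2] using this
      -- choose a sign so that some entry is positive
      have hsign : ∃ Λ : ι → ℝ, (∀ i, Λ i ≠ 0 → i ∈ s) ∧ (∑ i, Λ i • g i = 0) ∧ ∃ i, 0 < Λ i := by
        by_cases hpos' : ∃ i, 0 < Λ₀ i
        · exact ⟨Λ₀, hsupp₀, hΛ₀sum, hpos'⟩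
        · refine ⟨-Λ₀, fun i hi => hsupp₀ i (by simpa using hi), by
            simp only [Pi.neg_apply, neg_smul, Finset.sum_neg_distrib, hΛ₀sum, neg_zero], ?_⟩
          push_neg at hpos'
          obtain ⟨i0, hi0⟩ := Function.ne_iff.1 hΛ₀ne
          exact ⟨i0, by simpa using lt_of_le_of_ne (hpos' i0) (by simpa using hi0)⟩
      obtain ⟨Λ, hsupp, hΛsum, i1, hi1⟩ := hsign
      set P : Finset ι := univ.filter (fun i => 0 < Λ i) with hP
      have hPne : P.Nonempty := ⟨i1, by simp [hP, hi1]⟩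
      set r : ℝ := P.inf' hPne (fun i => c i / Λ i) with hr
      obtain ⟨istar, histar, histareq⟩ := Finset.exists_mem_eq_inf' hPne (fun i => c i / Λ i)
      have histarP : 0 < Λ istar := by simpa [hP] using histar
      have hr0 : 0 ≤ r := by
        rw [hr, histareq]
        exact div_nonneg (hpos istar) histarP.le
      have hrle : ∀ i, 0 < Λ i → r * Λ i ≤ c i := by
        intro i hi
        have : r ≤ c i / Λ i := Finset.inf'_le _ (by simp [hP, hi])
        calc r * Λ i ≤ (c i / Λ i) * Λ i := by nlinarith
        _ = c i := div_mul_cancel₀ _ hi.ne'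
      set c'' : ι → ℝ := fun i => c i - r * Λ i with hc''
      have hc''pos : ∀ i, 0 ≤ c'' i := by
        intro i
        rcases le_or_gt (Λ i) 0 with h | h
        · have : r * Λ i ≤ 0 := mul_nonpos_of_nonneg_of_nonpos hr0 h
          simp only [hc'']
          linarith [hpos i]
        · simp only [hc'']
          linarith [hrle i h]
      have hc''star : c'' istar = 0 := by
        show c istar - r * Λ istar = 0
        rw [hr, histareq]
        field_simp
        ring
      have hc''supp : (univ.filter fun i => c'' i ≠ 0) ⊆ s.erase istar := by
        intro i hi
        simp only [Finset.mem_filter, Finset.mem_univ, true_and] at hi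
        have his : i ∈ s := by
          by_contra h
          have h1 : c i = 0 := by
            by_contra hci
            exact h (by simp [hs, hci])
          have h2 : Λ i = 0 := by
            by_contra hΛi
            exact h (hsupp i hΛi)
          exact hi (by simp [hc'', h1, h2])
        refine Finset.mem_erase.2 ⟨?_, his⟩
        intro h
        rw [h] at hi
        exact hi hc''star
      have hcard'' : (univ.filter fun i => c'' i ≠ 0).card ≤ n := by
        have h1 : (s.erase istar).card < s.card :=
          Finset.card_erase_lt_of_mem (hsupp istar histarP.ne')
        have h2 := Finset.card_le_card hc''supp
        omega
      obtain ⟨t, hli', c3, h3pos, h3supp, h3sum⟩ := ih c'' hcard'' hc''pos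
      refine ⟨t, hli', c3, h3pos, h3supp, ?_⟩
      rw [h3sum]
      have : ∑ i, c'' i • g i = ∑ i, c i • g i - r • ∑ i, Λ i • g i := by
        rw [Finset.smul_sum, ← Finset.sum_sub_distrib]
        refine Finset.sum_congr rfl fun i _ => ?_
        rw [smul_smul, ← sub_smul]
      rw [this, hΛsum, smul_zero, sub_zero]

lemma isClosed_coneOf {ι : Type*} [Fintype ι] [DecidableEq ι] [FiniteDimensional ℝ E]
    (g : ι → E) : IsClosed (coneOf g) := by
  have hrepr : coneOf g = ⋃ t ∈ {t : Finset ι | LinearIndependent ℝ (fun i : t => g i)},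
      (fun c : {x // x ∈ t} → ℝ => ∑ i, c i • g ↑i) '' {c | ∀ i, 0 ≤ c i} := by
    ext z
    constructor
    · rintro ⟨c, hc, rfl⟩
      obtain ⟨t, hli, c', hpos, hsupp, hsum⟩ :=
        cara_aux g (univ.filter fun i => c i ≠ 0).card c le_rfl hc
      refine Set.mem_biUnion hli ⟨fun i => c' ↑i, fun i => hpos ↑i, ?_⟩
      rw [← hsum]
      rw [← Finset.sum_subset (Finset.subset_univ t) (fun i _ hi => by rw [hsupp i hi, zero_smul])]
      rw [← Finset.sum_attach t (fun i => c' i • g i)]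
      rfl
    · intro hmem
      simp only [Set.mem_iUnion, Set.mem_image, Set.mem_setOf_eq] at hmem
      obtain ⟨t, ht, c, hc, rfl⟩ := hmem
      refine ⟨fun i => if h : i ∈ t then c ⟨i, h⟩ else 0, fun i => by dsimp only; split <;> simp [hc _], ?_⟩
      rw [← Finset.sum_subset (Finset.subset_univ t) (fun i _ hi => by simp [hi])]
      rw [← Finset.sum_attach t (fun i => (if h : i ∈ t then c ⟨i, h⟩ else 0) • g i)]
      refine Finset.sum_congr rfl fun i _ => ?_
      simp [i.2]
  rw [hrepr]
  refine Set.Finite.isClosed_biUnion (Set.toFinite _) ?_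
  rintro t hli
  set L : ({x // x ∈ t} → ℝ) →ₗ[ℝ] E :=
    { toFun := fun c => ∑ i, c i • g ↑i
      map_add' := by
        intro a b
        rw [← Finset.sum_add_distrib]
        exact Finset.sum_congr rfl fun i _ => add_smul _ _ _
      map_smul' := by
        intro m a
        rw [RingHom.id_apply, Finset.smul_sum]
        exact Finset.sum_congr rfl fun i _ => (smul_smul _ _ _).symm } with hL
  have hker : LinearMap.ker L = ⊥ := by
    rw [LinearMap.ker_eq_bot']
    intro m hm
    have := Fintype.linearIndependent_iff.1 hli m hm
    funext i
    exact this i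
  have hemb := LinearMap.isClosedEmbedding_of_injective (E := {x // x ∈ t} → ℝ) (F := E) (f := L) hker
  have hcl : IsClosed {c : {x // x ∈ t} → ℝ | ∀ i, 0 ≤ c i} := by
    have : {c : {x // x ∈ t} → ℝ | ∀ i, 0 ≤ c i} = ⋂ i, {c | 0 ≤ c i} := by
      ext c; simp [Set.mem_iInter]
    rw [this]
    exact isClosed_iInter fun i => isClosed_le continuous_const (continuous_apply i)
  exact hemb.isClosedMap _ hcl

lemma coneOf_separation {ι : Type*} [Fintype ι] [DecidableEq ι] [FiniteDimensional ℝ E]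
    (g : ι → E) (e : E) (he : e ∉ coneOf g) :
    ∃ φ : E →L[ℝ] ℝ, (∀ z ∈ coneOf g, φ z ≤ 0) ∧ 0 < φ e := by
  obtain ⟨φ, u, hlt, hu⟩ :=
    geometric_hahn_banach_closed_point (convex_coneOf g) (isClosed_coneOf g) he
  have h0 : (0 : ℝ) < u := by
    have := hlt 0 (zero_mem_coneOf g)
    simpa using this
  refine ⟨φ, ?_, h0.trans hu⟩
  intro z hz
  by_contra hpos
  push_neg at hpos
  have hmem := smul_mem_coneOf hz (t := u / φ z + 1) (by positivity)
  have := hlt _ hmem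
  rw [map_smul, smul_eq_mul] at this
  have hexp : (u / φ z + 1) * φ z = u + φ z := by field_simp
  nlinarith

set_option maxHeartbeats 1000000 in
theorem exists_tight_majorant [FiniteDimensional ℝ E]
    (S : Finset E) (w : E → ℝ) (x : E) (hx : x ∈ convexHull ℝ (S : Set E)) :
    ∃ u : E →ᵃ[ℝ] ℝ, (∀ p ∈ S, w p ≤ u p) ∧
      x ∈ convexHull ℝ {p : E | p ∈ S ∧ u p = w p} := by
  classical
  have hSne : S.Nonempty := by
    by_contra h
    rw [Finset.not_nonempty_iff_eq_empty] at h
    subst h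
    simp at hx
  haveI hne : Nonempty {p // p ∈ S} := ⟨⟨hSne.choose, hSne.choose_spec⟩⟩
  set val : ({p // p ∈ S} → ℝ) → ℝ := fun β => ∑ i, β i * w ↑i with hval
  set A : Set ({p // p ∈ S} → ℝ) :=
    {α | (∀ i, 0 ≤ α i) ∧ ∑ i, α i = 1 ∧ ∑ i, α i • (i : E) = x} with hA
  have hAne : A.Nonempty := by
    rw [Finset.convexHull_eq] at hx
    obtain ⟨w', h0, h1, hcm⟩ := hx
    rw [Finset.centerMass_eq_of_sum_1 _ _ h1] at hcm
    refine ⟨fun i => w' ↑i, fun i => h0 ↑i i.2, ?_, ?_⟩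
    · rw [Finset.sum_coe_sort S w']
      exact h1
    · rw [Finset.sum_coe_sort S (fun p => w' p • p)]
      simpa [id] using hcm
  have hAcl : IsClosed A := by
    have h1 : IsClosed {α : {p // p ∈ S} → ℝ | ∀ i, 0 ≤ α i} := by
      have : {α : {p // p ∈ S} → ℝ | ∀ i, 0 ≤ α i} = ⋂ i, {α | 0 ≤ α i} := by
        ext α; simp [Set.mem_iInter]
      rw [this]
      exact isClosed_iInter fun i => isClosed_le continuous_const (continuous_apply i)
    have h2 : Continuous fun α : {p // p ∈ S} → ℝ => ∑ i, α i :=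
      continuous_finset_sum _ (fun i _ => continuous_apply i)
    have h3 : Continuous fun α : {p // p ∈ S} → ℝ => ∑ i, α i • (i : E) :=
      continuous_finset_sum _ (fun i _ => (continuous_apply i).smul continuous_const)
    have hrw : A = {α : {p // p ∈ S} → ℝ | ∀ i, 0 ≤ α i} ∩
        ((fun α : {p // p ∈ S} → ℝ => ∑ i, α i) ⁻¹' {1}) ∩
        ((fun α : {p // p ∈ S} → ℝ => ∑ i, α i • (i : E)) ⁻¹' {x}) := by
      ext α
      simp only [hA, Set.mem_setOf_eq, Set.mem_inter_iff, Set.mem_preimage,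
        Set.mem_singleton_iff]
      tauto
    rw [hrw]
    exact (h1.inter (isClosed_singleton.preimage h2)).inter (isClosed_singleton.preimage h3)
  have hAsub : A ⊆ Set.Icc 0 1 := by
    rintro α ⟨h0, h1, -⟩
    rw [Set.mem_Icc]
    constructor
    · intro i; exact h0 i
    · intro i
      calc α i ≤ ∑ j, α j := Finset.single_le_sum (fun j _ => h0 j) (mem_univ i)
      _ = 1 := h1
  have hAcp : IsCompact A := isCompact_Icc.of_isClosed_subset hAcl hAsub
  have hvalcont : ContinuousOn val A :=
    (continuous_finset_sum _ (fun i _ => (continuous_apply i).mul continuous_const)).continuousOn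
  obtain ⟨α, hαA, hmax⟩ := hAcp.exists_isMaxOn hAne hvalcont
  -- the cone
  set ghat : {p // p ∈ S} → E × ℝ × ℝ := fun i => ((i : E), 1, w ↑i) with hghat
  set G : ({p // p ∈ S} ⊕ ({p // p ∈ S} ⊕ Unit)) → E × ℝ × ℝ := fun k =>
    Sum.elim (fun i => ghat i)
      (Sum.elim (fun i => if 0 < α i then -ghat i else 0) (fun _ => ((0 : E), (0:ℝ), (-1:ℝ)))) k
    with hG
  set e : E × ℝ × ℝ := ((0:E), (0:ℝ), (1:ℝ)) with he
  have henot : e ∉ coneOf G := by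
    intro hmem
    rw [coneOf_mem_iff] at hmem
    obtain ⟨c, hc, hsum⟩ := hmem
    set ν : {p // p ∈ S} → ℝ :=
      fun i => c (Sum.inl i) - (if 0 < α i then c (Sum.inr (Sum.inl i)) else 0) with hν
    have hsplit : (∑ i, ν i • ghat i) + c (Sum.inr (Sum.inr ())) • ((0:E), (0:ℝ), (-1:ℝ)) = e := by
      rw [← hsum, Fintype.sum_sum_type, Fintype.sum_sum_type]
      have hmid : ∀ i, c (Sum.inr (Sum.inl i)) • G (Sum.inr (Sum.inl i)) =
          -((if 0 < α i then c (Sum.inr (Sum.inl i)) else 0) • ghat i) := by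
        intro i
        rw [hG]
        simp only [Sum.elim_inr, Sum.elim_inl]
        split_ifs with h
        · rw [smul_neg]
        · simp
      have hunit : ∑ a₂ : Unit, c (Sum.inr (Sum.inr a₂)) • G (Sum.inr (Sum.inr a₂)) =
          c (Sum.inr (Sum.inr ())) • ((0:E), (0:ℝ), (-1:ℝ)) := by
        simp [hG]
      have h1 : ∑ i, ν i • ghat i = (∑ i, c (Sum.inl i) • ghat i)
          - ∑ i, (if 0 < α i then c (Sum.inr (Sum.inl i)) else 0) • ghat i := by
        rw [← Finset.sum_sub_distrib]
        refine Finset.sum_congr rfl fun i _ => ?_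
        show (c (Sum.inl i) - if 0 < α i then c (Sum.inr (Sum.inl i)) else 0) • ghat i = _
        rw [sub_smul]
      have h2 : ∑ i, c (Sum.inr (Sum.inl i)) • G (Sum.inr (Sum.inl i))
          = -∑ i, (if 0 < α i then c (Sum.inr (Sum.inl i)) else 0) • ghat i := by
        rw [← Finset.sum_neg_distrib]
        exact Finset.sum_congr rfl fun i _ => hmid i
      have h3 : ∑ i, c (Sum.inl i) • G (Sum.inl i) = ∑ i, c (Sum.inl i) • ghat i := rfl
      rw [h1, h2, h3, hunit]
      abel
    -- project onto the three coordinates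
    set c3 : ℝ := c (Sum.inr (Sum.inr ())) with hc3
    have hc3nn : 0 ≤ c3 := hc _
    set pi1 : E × ℝ × ℝ →ₗ[ℝ] E := LinearMap.fst ℝ E (ℝ × ℝ) with hpi1
    set pi2 : E × ℝ × ℝ →ₗ[ℝ] ℝ :=
      (LinearMap.fst ℝ ℝ ℝ).comp (LinearMap.snd ℝ E (ℝ × ℝ)) with hpi2
    set pi3 : E × ℝ × ℝ →ₗ[ℝ] ℝ :=
      (LinearMap.snd ℝ ℝ ℝ).comp (LinearMap.snd ℝ E (ℝ × ℝ)) with hpi3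
    have h1 : ∑ i, ν i • (i : E) = 0 := by
      have := congrArg pi1 hsplit
      simpa [map_add, map_sum, map_smul, hpi1, hghat, he] using this
    have h2 : ∑ i, ν i = 0 := by
      have := congrArg pi2 hsplit
      simpa [map_add, map_sum, map_smul, hpi2, hghat, he, smul_eq_mul] using this
    have h3 : ∑ i, ν i * w ↑i = 1 + c3 := by
      have := congrArg pi3 hsplit
      simp only [map_add, map_sum, map_smul, hpi3, hghat, he, LinearMap.comp_apply,
        LinearMap.snd_apply, smul_eq_mul] at this
      linarith [this]
    -- a strictly better point of A
    have hνnn : ∀ i, ¬0 < α i → 0 ≤ ν i := by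
      intro i h
      show 0 ≤ c (Sum.inl i) - if 0 < α i then c (Sum.inr (Sum.inl i)) else 0
      rw [if_neg h, sub_zero]
      exact hc _
    set tmin : ℝ := univ.inf' Finset.univ_nonempty (fun i => if ν i < 0 then α i / (-ν i) else 1)
      with htmin
    have htpos : 0 < tmin := by
      rw [htmin, Finset.lt_inf'_iff]
      intro i _
      split_ifs with h
      · have hαpos : 0 < α i := by
          by_contra hle
          exact absurd (hνnn i hle) (not_le.2 h)
        exact div_pos hαpos (by linarith)
      · exact one_pos
    have hαt : ∀ i, ν i < 0 → tmin * (-ν i) ≤ α i := by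
      intro i h
      have hle : tmin ≤ α i / (-ν i) := by
        have := Finset.inf'_le (fun i => if ν i < 0 then α i / (-ν i) else 1) (mem_univ i)
        rw [if_pos h] at this
        exact this
      have hneg : (0:ℝ) < -ν i := by linarith
      calc tmin * (-ν i) ≤ (α i / (-ν i)) * (-ν i) :=
        mul_le_mul_of_nonneg_right hle hneg.le
      _ = α i := div_mul_cancel₀ _ hneg.ne'
    set α' : {p // p ∈ S} → ℝ := fun i => α i + tmin * ν i with hα'
    have hα'A : α' ∈ A := by
      refine ⟨?_, ?_, ?_⟩
      · intro i
        show 0 ≤ α i + tmin * ν i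
        rcases lt_or_ge (ν i) 0 with h | h
        · have := hαt i h
          nlinarith
        · have : 0 ≤ tmin * ν i := mul_nonneg htpos.le h
          linarith [hαA.1 i]
      · show ∑ i, (α i + tmin * ν i) = 1
        rw [Finset.sum_add_distrib, ← Finset.mul_sum, h2, hαA.2.1]
        ring
      · show ∑ i, (α i + tmin * ν i) • (i : E) = x
        have : ∀ i : {p // p ∈ S}, (α i + tmin * ν i) • (i : E)
            = α i • (i : E) + tmin • (ν i • (i : E)) := by
          intro i
          rw [add_smul, smul_smul]
        rw [Finset.sum_congr rfl fun i _ => this i, Finset.sum_add_distrib,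
          ← Finset.smul_sum, h1, smul_zero, add_zero, hαA.2.2]
    have hval' : val α' = val α + tmin * (1 + c3) := by
      show ∑ i, (α i + tmin * ν i) * w ↑i = (∑ i, α i * w ↑i) + tmin * (1 + c3)
      rw [← h3, Finset.mul_sum, ← Finset.sum_add_distrib]
      refine Finset.sum_congr rfl fun i _ => ?_
      ring
    have := hmax hα'A
    rw [Set.mem_setOf_eq] at this
    have hgain : 0 < tmin * (1 + c3) := by nlinarith
    rw [hval'] at this
    linarith [this]
  -- separation
  obtain ⟨φ, hφle, hφe⟩ := coneOf_separation G e henot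
  have hgen : ∀ k, φ (G k) ≤ 0 := fun k => hφle _ (mem_coneOf G k)
  have hgi : ∀ i, φ (ghat i) ≤ 0 := fun i => hgen (Sum.inl i)
  have hgiB : ∀ i, 0 < α i → φ (ghat i) = 0 := by
    intro i hi
    have h2 := hgen (Sum.inr (Sum.inl i))
    rw [hG] at h2
    simp only [Sum.elim_inr, Sum.elim_inl, if_pos hi, map_neg] at h2
    exact le_antisymm (hgi i) (by linarith)
  set c₀ : ℝ := φ ((0:E), (0:ℝ), (1:ℝ)) with hc₀
  have hc₀pos : 0 < c₀ := hφe
  set L : E →ₗ[ℝ] ℝ := (φ.toLinearMap).comp (LinearMap.inl ℝ E (ℝ × ℝ)) with hLdef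
  set β : ℝ := φ ((0:E), (1:ℝ), (0:ℝ)) with hβ
  have hφdecomp : ∀ i : {p // p ∈ S}, φ (ghat i) = L ↑i + β + w ↑i * c₀ := by
    intro i
    have hsplit : ghat i = ((i : E), (0:ℝ), (0:ℝ)) + ((0:E), (1:ℝ), (0:ℝ))
        + (w ↑i) • ((0:E), (0:ℝ), (1:ℝ)) := by
      rw [hghat]
      refine Prod.ext ?_ (Prod.ext ?_ ?_) <;> simp
    rw [hsplit, map_add, map_add, map_smul, smul_eq_mul]
    have : φ ((i : E), (0:ℝ), (0:ℝ)) = L ↑i := by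
      rw [hLdef]
      simp [LinearMap.inl]
      rfl
    rw [this, hβ, hc₀]
  set u : E →ᵃ[ℝ] ℝ := AffineMap.mk' (fun z => c₀⁻¹ * (-(L z) - β)) (c₀⁻¹ • (-L)) 0
    (by
      intro p
      simp only [LinearMap.smul_apply, LinearMap.neg_apply, vsub_eq_sub, sub_zero,
        vadd_eq_add, map_zero, smul_eq_mul]
      ring) with hu
  have hueval : ∀ z : E, u z = c₀⁻¹ * (-(L z) - β) := by
    intro z
    rw [hu, AffineMap.coe_mk']
  have hup : ∀ p ∈ S, w p ≤ u p := by
    intro p hp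
    have := hgi ⟨p, hp⟩
    rw [hφdecomp ⟨p, hp⟩] at this
    rw [hueval]
    rw [inv_mul_eq_div, le_div_iff₀ hc₀pos]
    nlinarith
  have htight : ∀ i : {p // p ∈ S}, 0 < α i → u ↑i = w ↑i := by
    intro i hi
    have := hgiB i hi
    rw [hφdecomp i] at this
    rw [hueval]
    rw [inv_mul_eq_div, div_eq_iff hc₀pos.ne']
    nlinarith
  refine ⟨u, hup, ?_⟩
  set tpos : Finset {p // p ∈ S} := univ.filter (fun i => 0 < α i) with htposdef
  have hzero : ∀ i, i ∉ tpos → α i = 0 := by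
    intro i hi
    have : ¬0 < α i := by simpa [htposdef] using hi
    exact le_antisymm (not_lt.1 this) (hαA.1 i)
  have hsum1 : ∑ i ∈ tpos, α i = 1 := by
    rw [Finset.sum_subset (Finset.subset_univ tpos) (fun i _ hi => hzero i hi)]
    exact hαA.2.1
  have hx' : ∑ i ∈ tpos, α i • ((i : E)) = x := by
    rw [Finset.sum_subset (Finset.subset_univ tpos)
      (fun i _ hi => by rw [hzero i hi, zero_smul])]
    exact hαA.2.2
  have hmem := Finset.centerMass_mem_convexHull tpos (fun i _ => hαA.1 i)
    (by rw [hsum1]; norm_num)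
    (fun i hi => show ((i : E) ∈ {p : E | p ∈ S ∧ u p = w p}) from
      ⟨i.2, htight i (by simpa [htposdef] using hi)⟩)
  rwa [Finset.centerMass_eq_of_sum_1 _ _ hsum1, hx'] at hmem



theorem exists_generic_heights {E : Type*} [AddCommGroup E] [Module ℝ E] (V₀ : Finset E) :
    ∃ w : E → ℝ, ∀ T : Finset E, T ⊆ V₀ →
      (∃ u : E →ᵃ[ℝ] ℝ, ∀ p ∈ T, u p = w p) →
      AffineIndependent ℝ (fun v : ((T : Finset E) : Set E) => (v : E)) := by
  classical
  set k : E → ℕ := fun v => if h : v ∈ V₀ then ((V₀.equivFin ⟨v, h⟩ : Fin V₀.card) : ℕ) else 0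
    with hk
  have hkinj : ∀ v ∈ V₀, ∀ v' ∈ V₀, k v = k v' → v = v' := by
    intro v hv v' hv' h
    rw [hk] at h
    simp only [dif_pos hv, dif_pos hv'] at h
    have := V₀.equivFin.injective (Fin.ext h)
    exact congrArg Subtype.val this
  set AffDep : (E → ℝ) → Prop := fun μ =>
    (∀ v, μ v ≠ 0 → v ∈ V₀) ∧ (∑ v ∈ V₀, μ v = 0) ∧ (∑ v ∈ V₀, μ v • v = 0) ∧ (∃ v, μ v ≠ 0)
    with hAffDep
  set hasDep : Finset E → Prop := fun C =>
    ∃ μ : E → ℝ, AffDep μ ∧ V₀.filter (fun v => μ v ≠ 0) = C with hhasDep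
  set μC : Finset E → (E → ℝ) := fun C => if h : hasDep C then h.choose else 0 with hμC
  have hμCspec : ∀ C, hasDep C → AffDep (μC C) ∧ V₀.filter (fun v => (μC C) v ≠ 0) = C := by
    intro C h
    rw [hμC]
    simp only [dif_pos h]
    exact h.choose_spec
  set P : Finset E → Polynomial ℝ := fun C =>
    if hasDep C then ∑ v ∈ V₀, Polynomial.C (μC C v) * Polynomial.X ^ (k v) else 1 with hP
  have hPne : ∀ C, P C ≠ 0 := by
    intro C
    rw [hP]
    dsimp only
    split_ifs with h
    · obtain ⟨⟨hsupp, _, _, v0, hv0⟩, hfil⟩ := hμCspec C h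
      have hv0V : v0 ∈ V₀ := hsupp v0 hv0
      have hcoeff : (∑ v ∈ V₀, Polynomial.C (μC C v) * Polynomial.X ^ (k v)).coeff (k v0)
          = μC C v0 := by
        rw [Polynomial.finset_sum_coeff]
        rw [Finset.sum_eq_single v0]
        · simp [Polynomial.coeff_C_mul, Polynomial.coeff_X_pow]
        · intro v hv hne
          simp only [Polynomial.coeff_C_mul, Polynomial.coeff_X_pow]
          rw [if_neg (fun hkk => hne (hkinj v0 hv0V v hv hkk).symm)]
          ring
        · intro h'; exact absurd hv0V h'
      intro hzero
      rw [hzero] at hcoeff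
      simp at hcoeff
      exact hv0 hcoeff.symm
    · exact one_ne_zero
  have hBadfin : (⋃ C ∈ (V₀.powerset : Finset (Finset E)), {t : ℝ | (P C).IsRoot t}).Finite :=
    Set.Finite.biUnion (V₀.powerset.finite_toSet)
      (fun C _ => Polynomial.finite_setOf_isRoot (hPne C))
  obtain ⟨t, ht⟩ := hBadfin.infinite_compl.nonempty
  rw [Set.mem_compl_iff] at ht
  refine ⟨fun v => (t : ℝ) ^ (k v), ?_⟩
  intro T hTV hu
  obtain ⟨u, huw⟩ := hu
  by_contra hnot
  rw [affineIndependent_iff_of_fintype] at hnot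
  push_neg at hnot
  obtain ⟨wgt, hw0, hwv, i0, hi0⟩ := hnot
  rw [Finset.univ.weightedVSub_eq_linear_combination hw0] at hwv
  -- build the E-level dependency
  set μ : E → ℝ := fun v => if h : v ∈ (T : Set E) then wgt ⟨v, h⟩ else 0 with hμ
  have hμsupp : ∀ v, μ v ≠ 0 → v ∈ T := by
    intro v hv
    by_contra h
    exact hv (by rw [hμ]; simp [h])
  have hμ0 : ∀ v ∈ V₀, v ∉ T → μ v = 0 := by
    intro v _ hv
    exact dif_neg (fun hm => hv hm)
  have hμi : ∀ i : ((T : Finset E) : Set E), μ ↑i = wgt i := fun i => dif_pos i.2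
  have hμdep : AffDep μ := by
    refine ⟨fun v hv => hTV (hμsupp v hv), ?_, ?_, ?_⟩
    · rw [← Finset.sum_subset hTV hμ0, ← Finset.sum_finset_coe (fun v => μ v) T]
      rw [Finset.sum_congr rfl fun i _ => hμi i]
      exact hw0
    · rw [← Finset.sum_subset hTV (fun v hv1 hv2 => by rw [hμ0 v hv1 hv2, zero_smul]),
        ← Finset.sum_finset_coe (fun v => μ v • v) T]
      rw [Finset.sum_congr rfl fun i _ => by rw [hμi i]]
      exact hwv
    · refine ⟨↑i0, ?_⟩
      show μ ↑i0 ≠ 0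
      rw [hμi i0]
      exact hi0
  set C : Finset E := V₀.filter (fun v => μ v ≠ 0) with hC
  have hCdep : hasDep C := ⟨μ, hμdep, rfl⟩
  obtain ⟨hCaff, hCfil⟩ := hμCspec C hCdep
  -- the chosen dependency μC C is supported inside T
  have hsuppT : ∀ v, μC C v ≠ 0 → v ∈ T := by
    intro v hv
    have hvC : v ∈ C := by
      rw [← hCfil]
      exact Finset.mem_filter.2 ⟨hCaff.1 v hv, hv⟩
    rw [hC] at hvC
    exact hμsupp v (Finset.mem_filter.1 hvC).2
  -- the polynomial evaluates to zero at t
  have hzero : ∑ v ∈ V₀, μC C v * (t ^ (k v)) = 0 := by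
    have hueq : ∀ v ∈ V₀, μC C v * (t ^ (k v)) = μC C v * u v := by
      intro v hv
      by_cases h : μC C v = 0
      · rw [h, zero_mul, zero_mul]
      · rw [huw v (hsuppT v h)]
    rw [Finset.sum_congr rfl hueq]
    -- affine computation
    have hdecomp : ∀ v : E, u v = u.linear v + u 0 := by
      intro v
      conv_lhs => rw [show v = v +ᵥ (0 : E) by simp]
      rw [AffineMap.map_vadd, vadd_eq_add]
    have : ∑ v ∈ V₀, μC C v * u v
        = u.linear (∑ v ∈ V₀, μC C v • v) + (∑ v ∈ V₀, μC C v) * u 0 := by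
      rw [map_sum, Finset.sum_mul, ← Finset.sum_add_distrib]
      refine Finset.sum_congr rfl fun v _ => ?_
      rw [hdecomp v, map_smul, smul_eq_mul]
      ring
    rw [this, hCaff.2.1, hCaff.2.2.1, map_zero, zero_mul, add_zero]
  -- but genericity says it is nonzero
  have hCV : C ∈ V₀.powerset := Finset.mem_powerset.2 (Finset.filter_subset _ _)
  have hroot : (P C).IsRoot t := by
    rw [hP]
    dsimp only
    rw [if_pos hCdep]
    rw [Polynomial.IsRoot, Polynomial.eval_finset_sum]
    rw [← hzero]
    refine Finset.sum_congr rfl fun v _ => ?_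
    simp [Polynomial.eval_mul, Polynomial.eval_pow]
  exact ht (Set.mem_biUnion (Finset.mem_coe.2 hCV) hroot)


theorem hull_inter_of_affineIndependent {E : Type*} [AddCommGroup E] [Module ℝ E]
    [DecidableEq E] (T A B : Finset E) (hA : A ⊆ T) (hB : B ⊆ T)
    (hT : AffineIndependent ℝ (fun v : ((T : Finset E) : Set E) => (v : E))) :
    convexHull ℝ (A : Set E) ∩ convexHull ℝ (B : Set E) ⊆
      convexHull ℝ ((A ∩ B : Finset E) : Set E) := by
  classical
  rintro x ⟨hxA, hxB⟩
  rw [Finset.convexHull_eq] at hxA hxB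
  obtain ⟨a, ha0, ha1, hacm⟩ := hxA
  obtain ⟨b, hb0, hb1, hbcm⟩ := hxB
  rw [Finset.centerMass_eq_of_sum_1 _ _ ha1] at hacm
  rw [Finset.centerMass_eq_of_sum_1 _ _ hb1] at hbcm
  simp only [id] at hacm hbcm
  set a' : E → ℝ := fun v => if v ∈ A then a v else 0 with ha'
  set b' : E → ℝ := fun v => if v ∈ B then b v else 0 with hb'
  have ha'T : (∑ v ∈ T, a' v) = ∑ v ∈ A, a v := by
    rw [← Finset.sum_subset hA (fun v _ hv => if_neg hv)]
    exact Finset.sum_congr rfl fun v hv => if_pos hv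
  have hb'T : (∑ v ∈ T, b' v) = ∑ v ∈ B, b v := by
    rw [← Finset.sum_subset hB (fun v _ hv => if_neg hv)]
    exact Finset.sum_congr rfl fun v hv => if_pos hv
  have ha'Tv : (∑ v ∈ T, a' v • v) = ∑ v ∈ A, a v • v := by
    rw [← Finset.sum_subset hA (fun v _ hv => by
      rw [show a' v = 0 from if_neg hv, zero_smul])]
    exact Finset.sum_congr rfl fun v hv => by rw [show a' v = a v from if_pos hv]
  have hb'Tv : (∑ v ∈ T, b' v • v) = ∑ v ∈ B, b v • v := by
    rw [← Finset.sum_subset hB (fun v _ hv => by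
      rw [show b' v = 0 from if_neg hv, zero_smul])]
    exact Finset.sum_congr rfl fun v hv => by rw [show b' v = b v from if_pos hv]
  have hkey : ∀ v ∈ T, a' v = b' v := by
    have hiff := affineIndependent_iff.1 hT
    have h1 : (∑ i : ((T : Finset E) : Set E), (a' ↑i - b' ↑i)) = 0 := by
      have e1 : (∑ i : ((T : Finset E) : Set E), (a' ↑i - b' ↑i)) = ∑ v ∈ T, (a' v - b' v) :=
        Finset.sum_finset_coe (fun v => a' v - b' v) T
      rw [e1, Finset.sum_sub_distrib, ha'T, hb'T, ha1, hb1, sub_self]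
    have h2 : (∑ i : ((T : Finset E) : Set E), (a' ↑i - b' ↑i) • (↑i : E)) = 0 := by
      have e2 : (∑ i : ((T : Finset E) : Set E), (a' ↑i - b' ↑i) • (↑i : E))
          = ∑ v ∈ T, (a' v - b' v) • v :=
        Finset.sum_finset_coe (fun v => (a' v - b' v) • v) T
      rw [e2]
      have heach : ∀ v ∈ T, (a' v - b' v) • v = a' v • v - b' v • v :=
        fun v _ => sub_smul _ _ _
      rw [Finset.sum_congr rfl heach, Finset.sum_sub_distrib, ha'Tv, hb'Tv, hacm, hbcm, sub_self]
    have hres := hiff Finset.univ (fun i => a' ↑i - b' ↑i) h1 h2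
    intro v hv
    exact sub_eq_zero.1 (hres ⟨v, hv⟩ (Finset.mem_univ _))
  have hsupp : ∀ v, a' v ≠ 0 → v ∈ A ∩ B := by
    intro v hv
    have hvA : v ∈ A := by
      by_contra h
      exact hv (if_neg h)
    have hvB : v ∈ B := by
      have := hkey v (hA hvA)
      rw [this] at hv
      by_contra h
      exact hv (if_neg h)
    exact Finset.mem_inter.2 ⟨hvA, hvB⟩
  have hsum1 : ∑ v ∈ A ∩ B, a' v = 1 := by
    rw [Finset.sum_subset Finset.inter_subset_left (fun v hv hv' => by
      by_contra h
      exact hv' (hsupp v h))]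
    rw [show (∑ v ∈ A, a' v) = ∑ v ∈ A, a v from Finset.sum_congr rfl fun v hv => if_pos hv]
    exact ha1
  have hsumv : ∑ v ∈ A ∩ B, a' v • v = x := by
    rw [Finset.sum_subset Finset.inter_subset_left (fun v hv hv' => by
      have h0 : a' v = 0 := by
        by_contra h
        exact hv' (hsupp v h)
      rw [h0, zero_smul])]
    rw [show (∑ v ∈ A, a' v • v) = ∑ v ∈ A, a v • v from
      Finset.sum_congr rfl fun v hv => by rw [show a' v = a v from if_pos hv]]
    exact hacm
  have hnn : ∀ v ∈ A ∩ B, 0 ≤ a' v := by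
    intro v _
    show (0:ℝ) ≤ if v ∈ A then a v else 0
    split_ifs with h
    · exact ha0 v h
    · exact le_rfl
  have hcm := Finset.centerMass_id_mem_convexHull (A ∩ B) (w := a') hnn
    (by rw [hsum1]; norm_num)
  rw [Finset.centerMass_eq_of_sum_1 _ _ hsum1] at hcm
  simp only [id] at hcm
  rwa [hsumv] at hcm

end AuxLemmas

set_option maxHeartbeats 2000000 in
/-- The upper-boundary function of a polytope `Z ⊆ ℝ^d × ℝ`, on the projection `Ω` of `Z`,
is concave continuous piecewise linear; moreover it is interpolated by a triangulation of
`Ω` all of whose vertices lift to extreme points of `Z`. -/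
theorem upper_boundary_cpl_triangulation {d : ℕ} (Z : Set ((Fin d → ℝ) × ℝ))
    (hZ : IsPolytope Z) (f : (Fin d → ℝ) → ℝ)
    (hf : ∀ ω ∈ Prod.fst '' Z, IsGreatest {y : ℝ | (ω, y) ∈ Z} (f ω)) :
    IsPolytope (Prod.fst '' Z) ∧
    ConcaveOn ℝ (Prod.fst '' Z) f ∧
    IsPWLOn (Prod.fst '' Z) f ∧ ContinuousOn f (Prod.fst '' Z) ∧
    ∃ γ : Triangulation (Fin d → ℝ) (Prod.fst '' Z),
      IsInterpolation γ f f ∧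
      ∀ V ∈ γ.simplices, ∀ v ∈ V, (v, f v) ∈ Set.extremePoints ℝ Z := by
  classical
  obtain ⟨F, hF⟩ := hZ
  have hZconv : Convex ℝ Z := hF ▸ convex_convexHull ℝ _
  have hZcomp : IsCompact Z := by
    rw [hF]; exact F.finite_toSet.isCompact_convexHull (𝕜 := ℝ)
  set Ω : Set (Fin d → ℝ) := Prod.fst '' Z with hΩdef
  have hmem : ∀ ω ∈ Ω, (ω, f ω) ∈ Z := fun ω hω => (hf ω hω).1
  have hub : ∀ ω ∈ Ω, ∀ y, (ω, y) ∈ Z → y ≤ f ω := fun ω hω y hy => (hf ω hω).2 hy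
  -- Ω is a polytope
  have hfstim : Ω = convexHull ℝ ((F.image Prod.fst : Finset (Fin d → ℝ)) : Set (Fin d → ℝ)) := by
    rw [hΩdef, hF, Finset.coe_image]
    exact LinearMap.image_convexHull (LinearMap.fst ℝ (Fin d → ℝ) ℝ) _
  have hΩpoly : IsPolytope Ω := ⟨F.image Prod.fst, hfstim⟩
  have hΩconv : Convex ℝ Ω := hfstim ▸ convex_convexHull ℝ _
  -- concavity
  have hconc : ConcaveOn ℝ Ω f := by
    refine ⟨hΩconv, ?_⟩
    intro x hx y hy a b ha hb hab
    have hcomb := hZconv (hmem x hx) (hmem y hy) ha hb hab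
    have hco : (a • x + b • y, a * f x + b * f y) ∈ Z := by
      have heq : a • (x, f x) + b • (y, f y) = (a • x + b • y, a * f x + b * f y) := by
        simp [Prod.ext_iff, smul_eq_mul]
      rwa [heq] at hcomb
    have hfst : a • x + b • y ∈ Ω := ⟨_, hco, rfl⟩
    simpa [smul_eq_mul] using hub _ hfst _ hco
  -- Minkowski
  have hextsub : Z.extremePoints ℝ ⊆ ↑F := by
    rw [hF]; exact extremePoints_convexHull_subset
  have hextfin : (Z.extremePoints ℝ).Finite := Set.Finite.subset F.finite_toSet hextsub
  have hZeq : Z = convexHull ℝ (Z.extremePoints ℝ) := by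
    have h1 := closure_convexHull_extremePoints hZcomp hZconv
    have h2 : IsClosed (convexHull ℝ (Z.extremePoints ℝ)) :=
      (hextfin.isCompact_convexHull (𝕜 := ℝ)).isClosed
    conv_lhs => rw [← h1]
    rw [h2.closure_eq]
  set Uset : Set ((Fin d → ℝ) × ℝ) := {q | q ∈ Z.extremePoints ℝ ∧ q.2 = f q.1} with hUsetdef
  have hUfinite : Uset.Finite := hextfin.subset (fun q hq => hq.1)
  set Ufin : Finset ((Fin d → ℝ) × ℝ) := hUfinite.toFinset with hUfindef
  set V₀ : Finset (Fin d → ℝ) := Ufin.image Prod.fst with hV₀def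
  have hextΩ : ∀ q, q ∈ Z.extremePoints ℝ → q.1 ∈ Ω ∧ q.2 ≤ f q.1 := by
    intro q hq
    have hqZ : q ∈ Z := hq.1
    have hq1 : q.1 ∈ Ω := ⟨q, hqZ, rfl⟩
    refine ⟨hq1, hub q.1 hq1 q.2 ?_⟩
    show (q.1, q.2) ∈ Z
    simpa using hqZ
  have hV₀lift : ∀ v ∈ V₀, (v, f v) ∈ Uset := by
    intro v hv
    rw [hV₀def, Finset.mem_image] at hv
    obtain ⟨q, hq, rfl⟩ := hv
    rw [hUfindef, Set.Finite.mem_toFinset] at hq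
    have hq2 : q = (q.1, f q.1) := by
      rw [Prod.ext_iff]
      exact ⟨rfl, hq.2⟩
    rw [← hq2]
    exact hq
  have hV₀Ω : ∀ v ∈ V₀, v ∈ Ω := fun v hv => (hextΩ _ (hV₀lift v hv).1).1
  -- helper: representation in convex hull of a finset
  have hrep : ∀ (W : Finset (Fin d → ℝ)) (x : Fin d → ℝ), x ∈ convexHull ℝ (W : Set (Fin d → ℝ)) →
      ∃ c : (Fin d → ℝ) → ℝ, (∀ v ∈ W, 0 ≤ c v) ∧ (∑ v ∈ W, c v) = 1 ∧ ∑ v ∈ W, c v • v = x := by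
    intro W x hx
    rw [Finset.convexHull_eq] at hx
    obtain ⟨c, h0, h1, hcm⟩ := hx
    rw [Finset.centerMass_eq_of_sum_1 _ _ h1] at hcm
    exact ⟨c, h0, h1, by simpa [id] using hcm⟩
  have hhull : ∀ (W : Finset (Fin d → ℝ)) (c : (Fin d → ℝ) → ℝ), (∀ v ∈ W, 0 ≤ c v) →
      (∑ v ∈ W, c v) = 1 → (∑ v ∈ W, c v • v) ∈ convexHull ℝ (W : Set (Fin d → ℝ)) := by
    intro W c h0 h1
    have := Finset.centerMass_id_mem_convexHull W h0 (by rw [h1]; norm_num)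
    rw [Finset.centerMass_eq_of_sum_1 _ _ h1] at this
    simpa [id] using this
  -- helper: affine maps on convex combinations
  have haffsum : ∀ (W : Finset (Fin d → ℝ)) (c : (Fin d → ℝ) → ℝ), (∑ v ∈ W, c v) = 1 →
      ∀ g : (Fin d → ℝ) →ᵃ[ℝ] ℝ, g (∑ v ∈ W, c v • v) = ∑ v ∈ W, c v * g v := by
    intro W c hc g
    have hdecomp : ∀ z : Fin d → ℝ, g z = g.linear z + g 0 := by
      intro z
      conv_lhs => rw [show z = z +ᵥ (0 : Fin d → ℝ) by simp]
      rw [AffineMap.map_vadd, vadd_eq_add]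
    have h2 : ∑ v ∈ W, c v * g v
        = (∑ v ∈ W, g.linear (c v • v)) + (∑ v ∈ W, c v) * g 0 := by
      rw [Finset.sum_mul, ← Finset.sum_add_distrib]
      refine Finset.sum_congr rfl fun v _ => ?_
      rw [hdecomp v, map_smul, smul_eq_mul]
      ring
    rw [h2, hc, one_mul, ← map_sum, ← hdecomp]
  -- Lemma E : the graph point is in the hull of upper extreme points
  have lemE : ∀ x ∈ Ω, (x, f x) ∈ convexHull ℝ (Ufin : Set ((Fin d → ℝ) × ℝ)) := by
    intro x hx
    have hxZ : (x, f x) ∈ Z := hmem x hx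
    rw [hZeq, ← hextfin.coe_toFinset, Finset.convexHull_eq] at hxZ
    obtain ⟨β, hβ0, hβ1, hβcm⟩ := hxZ
    rw [Finset.centerMass_eq_of_sum_1 _ _ hβ1] at hβcm
    simp only [id] at hβcm
    set extFin := hextfin.toFinset with hextFin
    have hmemext : ∀ q ∈ extFin, q ∈ Z.extremePoints ℝ :=
      fun q hq => (Set.Finite.mem_toFinset _).1 hq
    have hcfst : ∑ q ∈ extFin, β q • q.1 = x := by
      have h := congrArg Prod.fst hβcm
      rw [Prod.fst_sum] at h
      simpa using h
    have hcsnd : ∑ q ∈ extFin, β q * q.2 = f x := by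
      have h := congrArg Prod.snd hβcm
      rw [Prod.snd_sum] at h
      simpa [smul_eq_mul] using h
    have hA2 : ∑ q ∈ extFin, β q * f q.1 ≤ f x := by
      have := hconc.le_map_sum hβ0 hβ1 (fun q hq => (hextΩ q (hmemext q hq)).1)
      rw [hcfst] at this
      simpa [smul_eq_mul] using this
    have hge : f x ≤ ∑ q ∈ extFin, β q * f q.1 := by
      rw [← hcsnd]
      exact Finset.sum_le_sum fun q hq =>
        mul_le_mul_of_nonneg_left (hextΩ q (hmemext q hq)).2 (hβ0 q hq)
    have hterm : ∀ q ∈ extFin, β q * (f q.1 - q.2) = 0 := by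
      have hsum0 : ∑ q ∈ extFin, β q * (f q.1 - q.2) = 0 := by
        have hexp : ∑ q ∈ extFin, β q * (f q.1 - q.2)
            = (∑ q ∈ extFin, β q * f q.1) - ∑ q ∈ extFin, β q * q.2 := by
          rw [← Finset.sum_sub_distrib]
          exact Finset.sum_congr rfl fun q _ => by ring
        rw [hexp, hcsnd]
        linarith [le_antisymm hA2 hge]
      exact (Finset.sum_eq_zero_iff_of_nonneg fun q hq =>
        mul_nonneg (hβ0 q hq) (sub_nonneg.2 (hextΩ q (hmemext q hq)).2)).1 hsum0
    have hsuppU : ∀ q ∈ extFin, β q ≠ 0 → q ∈ Ufin := by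
      intro q hq hβq
      have h0 := hterm q hq
      rcases mul_eq_zero.1 h0 with h | h
      · exact absurd h hβq
      · rw [hUfindef, Set.Finite.mem_toFinset]
        exact ⟨hmemext q hq, by linarith⟩
    set t' := extFin.filter (fun q => β q ≠ 0) with ht'
    have hsubt : t' ⊆ extFin := Finset.filter_subset _ _
    have ht'1 : ∑ q ∈ t', β q = 1 := by
      rw [ht', Finset.sum_filter_ne_zero]
      exact hβ1
    have hmem' := Finset.centerMass_mem_convexHull t'
      (fun q hq => hβ0 q (hsubt hq)) (by rw [ht'1]; norm_num)
      (fun q hq => show (id q : (Fin d → ℝ) × ℝ) ∈ (Ufin : Set ((Fin d → ℝ) × ℝ)) from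
        Finset.mem_coe.2 (hsuppU q (Finset.mem_filter.1 hq).1 (Finset.mem_filter.1 hq).2))
    rw [ht', Finset.centerMass_filter_ne_zero,
      Finset.centerMass_eq_of_sum_1 _ _ hβ1] at hmem'
    simp only [id] at hmem'
    rwa [hβcm] at hmem'
  -- Ω is the hull of V₀
  have hΩhull : Ω = convexHull ℝ (V₀ : Set (Fin d → ℝ)) := by
    apply Set.Subset.antisymm
    · intro x hx
      have hxU := lemE x hx
      have himg : Prod.fst '' (convexHull ℝ (Ufin : Set ((Fin d → ℝ) × ℝ)))
          = convexHull ℝ (V₀ : Set (Fin d → ℝ)) := by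
        rw [hV₀def, Finset.coe_image]
        exact LinearMap.image_convexHull (LinearMap.fst ℝ (Fin d → ℝ) ℝ) _
      rw [← himg]
      exact ⟨(x, f x), hxU, rfl⟩
    · exact convexHull_min (fun v hv => hV₀Ω v hv) hΩconv
  -- the majorant principle
  have hmaj : ∀ g : (Fin d → ℝ) →ᵃ[ℝ] ℝ, (∀ v ∈ V₀, f v ≤ g v) → ∀ x ∈ Ω, f x ≤ g x := by
    intro g hg x hx
    have hxU := lemE x hx
    set G : ((Fin d → ℝ) × ℝ) →ᵃ[ℝ] ℝ :=
      g.comp (LinearMap.fst ℝ (Fin d → ℝ) ℝ).toAffineMap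
        - (LinearMap.snd ℝ (Fin d → ℝ) ℝ).toAffineMap with hGdef
    have hGeval : ∀ q : (Fin d → ℝ) × ℝ, G q = g q.1 - q.2 := by
      intro q
      rw [hGdef]
      simp [AffineMap.comp]
    have hGU : (Ufin : Set ((Fin d → ℝ) × ℝ)) ⊆ {q | 0 ≤ G q} := by
      intro q hq
      rw [Finset.mem_coe, hUfindef, Set.Finite.mem_toFinset] at hq
      have hq1 : q.1 ∈ V₀ := by
        rw [hV₀def, Finset.mem_image]
        exact ⟨q, (Set.Finite.mem_toFinset _).2 hq, rfl⟩
      have := hg q.1 hq1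
      rw [Set.mem_setOf_eq, hGeval, hq.2]
      linarith
    have hGconv : Convex ℝ {q : (Fin d → ℝ) × ℝ | 0 ≤ G q} := by
      have : {q : (Fin d → ℝ) × ℝ | 0 ≤ G q} = G ⁻¹' (Set.Ici 0) := rfl
      rw [this]
      exact (convex_Ici (0:ℝ)).affine_preimage G
    have hfin := convexHull_min hGU hGconv hxU
    rw [Set.mem_setOf_eq, hGeval] at hfin
    simpa using hfin
  -- generic heights
  obtain ⟨wgen, hwgen⟩ := exists_generic_heights V₀
  -- simplices
  set Pred : Finset (Fin d → ℝ) → Prop := fun W =>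
    ∃ g u : (Fin d → ℝ) →ᵃ[ℝ] ℝ,
      (∀ p ∈ V₀, f p ≤ g p) ∧ (∀ p ∈ V₀, g p = f p → wgen p ≤ u p) ∧
      (∀ v ∈ W, g v = f v ∧ u v = wgen v) with hPreddef
  set simp0 : Finset (Finset (Fin d → ℝ)) := V₀.powerset.filter Pred with hsimp0def
  have hWspec : ∀ W ∈ simp0, W ⊆ V₀ ∧ Pred W := by
    intro W hW
    rw [hsimp0def, Finset.mem_filter, Finset.mem_powerset] at hW
    exact hW
  have hWmk : ∀ W : Finset (Fin d → ℝ), W ⊆ V₀ → Pred W → W ∈ simp0 := by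
    intro W h1 h2
    rw [hsimp0def, Finset.mem_filter, Finset.mem_powerset]
    exact ⟨h1, h2⟩
  -- tight sets are affinely independent
  have htight : ∀ g u : (Fin d → ℝ) →ᵃ[ℝ] ℝ, AffineIndependent ℝ
      (fun v : ((V₀.filter (fun p => g p = f p ∧ u p = wgen p) : Finset (Fin d → ℝ)) :
        Set (Fin d → ℝ)) => (v : Fin d → ℝ)) := by
    intro g u
    exact hwgen _ (Finset.filter_subset _ _) ⟨u, fun p hp => (Finset.mem_filter.1 hp).2.2⟩
  -- interpolation identity
  have hinterp : ∀ W ∈ simp0, ∀ α : (Fin d → ℝ) → ℝ, (∀ v ∈ W, 0 ≤ α v) →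
      (∑ v ∈ W, α v) = 1 → f (∑ v ∈ W, α v • v) = ∑ v ∈ W, α v * f v := by
    intro W hW α h0 h1
    obtain ⟨hWV, g, u, hg1, _, hg3⟩ := hWspec W hW
    have hxhull : (∑ v ∈ W, α v • v) ∈ convexHull ℝ (W : Set (Fin d → ℝ)) := hhull W α h0 h1
    have hxΩ : (∑ v ∈ W, α v • v) ∈ Ω := by
      rw [hΩhull]
      exact convexHull_mono (Finset.coe_subset.2 hWV) hxhull
    have hge : ∑ v ∈ W, α v * f v ≤ f (∑ v ∈ W, α v • v) := by
      have := hconc.le_map_sum (p := id) h0 h1 (fun v hv => hV₀Ω v (hWV hv))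
      simpa [smul_eq_mul, id] using this
    have hle : f (∑ v ∈ W, α v • v) ≤ ∑ v ∈ W, α v * f v := by
      have h2 : f (∑ v ∈ W, α v • v) ≤ g (∑ v ∈ W, α v • v) := hmaj g hg1 _ hxΩ
      rw [haffsum W α h1 g] at h2
      calc f (∑ v ∈ W, α v • v) ≤ ∑ v ∈ W, α v * g v := h2
      _ = ∑ v ∈ W, α v * f v :=
        Finset.sum_congr rfl fun v hv => by rw [(hg3 v hv).1]
    exact le_antisymm hle hge
  -- covering
  have hcovers : (⋃ V ∈ simp0, convexHull ℝ ((V : Finset (Fin d → ℝ)) : Set (Fin d → ℝ))) = Ω := by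
    apply Set.Subset.antisymm
    · refine Set.iUnion₂_subset fun W hW => ?_
      rw [hΩhull]
      exact convexHull_mono (Finset.coe_subset.2 (hWspec W hW).1)
    · intro x hx
      have hxV : x ∈ convexHull ℝ (V₀ : Set (Fin d → ℝ)) := hΩhull ▸ hx
      obtain ⟨g, hg1, hg2⟩ := exists_tight_majorant V₀ f x hxV
      set S₁ : Finset (Fin d → ℝ) := V₀.filter (fun p => g p = f p) with hS₁def
      have hS₁coe : {p : Fin d → ℝ | p ∈ V₀ ∧ g p = f p} = (S₁ : Set (Fin d → ℝ)) := by
        rw [hS₁def, Finset.coe_filter]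
      rw [hS₁coe] at hg2
      obtain ⟨u, hu1, hu2⟩ := exists_tight_majorant S₁ wgen x hg2
      set W : Finset (Fin d → ℝ) := S₁.filter (fun p => u p = wgen p) with hWdef
      have hWcoe : {p : Fin d → ℝ | p ∈ S₁ ∧ u p = wgen p} = (W : Set (Fin d → ℝ)) := by
        rw [hWdef, Finset.coe_filter]
      rw [hWcoe] at hu2
      have hWsimp : W ∈ simp0 := by
        refine hWmk W (fun p hp => Finset.mem_filter.1
          (Finset.mem_filter.1 hp).1 |>.1) ?_
        refine ⟨g, u, hg1, ?_, ?_⟩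
        · intro p hp hfp
          exact hu1 p (Finset.mem_filter.2 ⟨hp, hfp⟩)
        · intro v hv
          have h1 := Finset.mem_filter.1 hv
          have h2 := Finset.mem_filter.1 h1.1
          exact ⟨h2.2, h1.2⟩
      exact Set.mem_biUnion hWsimp hu2
  -- averaged affine map
  have hmkavg : ∀ g₁ g₂ : (Fin d → ℝ) →ᵃ[ℝ] ℝ, ∃ g : (Fin d → ℝ) →ᵃ[ℝ] ℝ,
      ∀ z, g z = (g₁ z + g₂ z) / 2 := by
    intro g₁ g₂
    have hdec : ∀ (g : (Fin d → ℝ) →ᵃ[ℝ] ℝ) (z : Fin d → ℝ), g z = g.linear z + g 0 := by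
      intro g z
      conv_lhs => rw [show z = z +ᵥ (0 : Fin d → ℝ) by simp]
      rw [AffineMap.map_vadd, vadd_eq_add]
    refine ⟨AffineMap.mk' (fun z => (g₁ z + g₂ z) / 2)
      ((2⁻¹ : ℝ) • (g₁.linear + g₂.linear)) 0 ?_, fun z => rfl⟩
    intro p
    simp only [LinearMap.smul_apply, LinearMap.add_apply, vsub_eq_sub, sub_zero,
      vadd_eq_add, smul_eq_mul]
    rw [hdec g₁ p, hdec g₂ p]
    ring
  -- the intersection property
  have hinter : ∀ V₁ ∈ simp0, ∀ V₂ ∈ simp0, ∃ V₃ ∈ simp0, V₃ ⊆ V₁ ∧ V₃ ⊆ V₂ ∧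
      convexHull ℝ (V₁ : Set (Fin d → ℝ)) ∩ convexHull ℝ (V₂ : Set (Fin d → ℝ))
        = convexHull ℝ ((V₃ : Finset (Fin d → ℝ)) : Set (Fin d → ℝ)) := by
    intro V₁ h₁ V₂ h₂
    obtain ⟨hV₁V, g₁, u₁, hA1, hA2, hA3⟩ := hWspec V₁ h₁
    obtain ⟨hV₂V, g₂, u₂, hB1, hB2, hB3⟩ := hWspec V₂ h₂
    obtain ⟨gm, hgm⟩ := hmkavg g₁ g₂
    obtain ⟨um, hum⟩ := hmkavg u₁ u₂
    have hmavg1 : ∀ p ∈ V₀, f p ≤ gm p := fun p hp => by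
      rw [hgm]; linarith [hA1 p hp, hB1 p hp]
    have hmtight : ∀ p ∈ V₀, gm p = f p → (g₁ p = f p ∧ g₂ p = f p) := by
      intro p hp h
      rw [hgm] at h
      constructor <;> linarith [hA1 p hp, hB1 p hp]
    have hmavg2 : ∀ p ∈ V₀, gm p = f p → wgen p ≤ um p := by
      intro p hp h
      obtain ⟨e1, e2⟩ := hmtight p hp h
      rw [hum]; linarith [hA2 p hp e1, hB2 p hp e2]
    have hV₁₂mem : V₁ ∩ V₂ ∈ simp0 := by
      refine hWmk _ (fun p hp => hV₁V (Finset.mem_inter.1 hp).1)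
        ⟨gm, um, hmavg1, hmavg2, fun v hv => ?_⟩
      obtain ⟨hv1, hv2⟩ := Finset.mem_inter.1 hv
      obtain ⟨e1, e2⟩ := hA3 v hv1
      obtain ⟨e3, e4⟩ := hB3 v hv2
      constructor
      · rw [hgm, e1, e3]; ring
      · rw [hum, e2, e4]; ring
    refine ⟨V₁ ∩ V₂, hV₁₂mem, Finset.inter_subset_left, Finset.inter_subset_right, ?_⟩
    apply Set.Subset.antisymm
    · rintro x ⟨hx₁, hx₂⟩
      obtain ⟨a, ha0, ha1, hav⟩ := hrep V₁ x hx₁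
      obtain ⟨b, hb0, hb1, hbv⟩ := hrep V₂ x hx₂
      have e₁ : g₁ x = ∑ v ∈ V₁, a v * f v := by
        rw [← hav, haffsum V₁ a ha1 g₁]
        exact Finset.sum_congr rfl fun v hv => by rw [(hA3 v hv).1]
      have e₂ : g₂ x = ∑ v ∈ V₂, b v * f v := by
        rw [← hbv, haffsum V₂ b hb1 g₂]
        exact Finset.sum_congr rfl fun v hv => by rw [(hB3 v hv).1]
      have i₁ : ∑ v ∈ V₁, a v * f v ≤ g₂ x := by
        rw [← hav, haffsum V₁ a ha1 g₂]
        exact Finset.sum_le_sum fun v hv =>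
          mul_le_mul_of_nonneg_left (hB1 v (hV₁V hv)) (ha0 v hv)
      have i₂ : ∑ v ∈ V₂, b v * f v ≤ g₁ x := by
        rw [← hbv, haffsum V₂ b hb1 g₁]
        exact Finset.sum_le_sum fun v hv =>
          mul_le_mul_of_nonneg_left (hA1 v (hV₂V hv)) (hb0 v hv)
      have hg12 : g₁ x = g₂ x := by linarith
      have step1a : ∀ v ∈ V₁, a v ≠ 0 → g₂ v = f v := by
        have hsz : ∑ v ∈ V₁, a v * (g₂ v - f v) = 0 := by
          have hexp : ∑ v ∈ V₁, a v * (g₂ v - f v)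
              = (∑ v ∈ V₁, a v * g₂ v) - ∑ v ∈ V₁, a v * f v := by
            rw [← Finset.sum_sub_distrib]
            exact Finset.sum_congr rfl fun v _ => by ring
          have hg2x : ∑ v ∈ V₁, a v * g₂ v = g₂ x := by
            rw [← hav, haffsum V₁ a ha1 g₂]
          rw [hexp, hg2x, ← hg12, e₁, sub_self]
        intro v hv hva
        have h0 := (Finset.sum_eq_zero_iff_of_nonneg (fun v hv =>
          mul_nonneg (ha0 v hv) (sub_nonneg.2 (hB1 v (hV₁V hv))))).1 hsz v hv
        rcases mul_eq_zero.1 h0 with h | h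
        · exact absurd h hva
        · linarith
      have step1b : ∀ v ∈ V₂, b v ≠ 0 → g₁ v = f v := by
        have hsz : ∑ v ∈ V₂, b v * (g₁ v - f v) = 0 := by
          have hexp : ∑ v ∈ V₂, b v * (g₁ v - f v)
              = (∑ v ∈ V₂, b v * g₁ v) - ∑ v ∈ V₂, b v * f v := by
            rw [← Finset.sum_sub_distrib]
            exact Finset.sum_congr rfl fun v _ => by ring
          have hg1x : ∑ v ∈ V₂, b v * g₁ v = g₁ x := by
            rw [← hbv, haffsum V₂ b hb1 g₁]
          rw [hexp, hg1x, hg12, e₂, sub_self]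
        intro v hv hvb
        have h0 := (Finset.sum_eq_zero_iff_of_nonneg (fun v hv =>
          mul_nonneg (hb0 v hv) (sub_nonneg.2 (hA1 v (hV₂V hv))))).1 hsz v hv
        rcases mul_eq_zero.1 h0 with h | h
        · exact absurd h hvb
        · linarith
      have j₁ : u₁ x = ∑ v ∈ V₁, a v * wgen v := by
        rw [← hav, haffsum V₁ a ha1 u₁]
        exact Finset.sum_congr rfl fun v hv => by rw [(hA3 v hv).2]
      have j₂ : u₂ x = ∑ v ∈ V₂, b v * wgen v := by
        rw [← hbv, haffsum V₂ b hb1 u₂]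
        exact Finset.sum_congr rfl fun v hv => by rw [(hB3 v hv).2]
      have k₁ : ∑ v ∈ V₁, a v * wgen v ≤ u₂ x := by
        rw [← hav, haffsum V₁ a ha1 u₂]
        refine Finset.sum_le_sum fun v hv => ?_
        by_cases hva : a v = 0
        · rw [hva, zero_mul, zero_mul]
        · exact mul_le_mul_of_nonneg_left
            (hB2 v (hV₁V hv) (step1a v hv hva)) (ha0 v hv)
      have k₂ : ∑ v ∈ V₂, b v * wgen v ≤ u₁ x := by
        rw [← hbv, haffsum V₂ b hb1 u₁]
        refine Finset.sum_le_sum fun v hv => ?_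
        by_cases hvb : b v = 0
        · rw [hvb, zero_mul, zero_mul]
        · exact mul_le_mul_of_nonneg_left
            (hA2 v (hV₂V hv) (step1b v hv hvb)) (hb0 v hv)
      have hu12 : u₁ x = u₂ x := by linarith
      have step2a : ∀ v ∈ V₁, a v ≠ 0 → u₂ v = wgen v := by
        have hnn : ∀ v ∈ V₁, 0 ≤ a v * (u₂ v - wgen v) := by
          intro v hv
          by_cases hva : a v = 0
          · rw [hva, zero_mul]
          · exact mul_nonneg (ha0 v hv)
              (sub_nonneg.2 (hB2 v (hV₁V hv) (step1a v hv hva)))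
        have hsz : ∑ v ∈ V₁, a v * (u₂ v - wgen v) = 0 := by
          have hexp : ∑ v ∈ V₁, a v * (u₂ v - wgen v)
              = (∑ v ∈ V₁, a v * u₂ v) - ∑ v ∈ V₁, a v * wgen v := by
            rw [← Finset.sum_sub_distrib]
            exact Finset.sum_congr rfl fun v _ => by ring
          have hu2x : ∑ v ∈ V₁, a v * u₂ v = u₂ x := by
            rw [← hav, haffsum V₁ a ha1 u₂]
          rw [hexp, hu2x, ← hu12, j₁, sub_self]
        intro v hv hva
        have h0 := (Finset.sum_eq_zero_iff_of_nonneg hnn).1 hsz v hv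
        rcases mul_eq_zero.1 h0 with h | h
        · exact absurd h hva
        · linarith
      have step2b : ∀ v ∈ V₂, b v ≠ 0 → u₁ v = wgen v := by
        have hnn : ∀ v ∈ V₂, 0 ≤ b v * (u₁ v - wgen v) := by
          intro v hv
          by_cases hvb : b v = 0
          · rw [hvb, zero_mul]
          · exact mul_nonneg (hb0 v hv)
              (sub_nonneg.2 (hA2 v (hV₂V hv) (step1b v hv hvb)))
        have hsz : ∑ v ∈ V₂, b v * (u₁ v - wgen v) = 0 := by
          have hexp : ∑ v ∈ V₂, b v * (u₁ v - wgen v)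
              = (∑ v ∈ V₂, b v * u₁ v) - ∑ v ∈ V₂, b v * wgen v := by
            rw [← Finset.sum_sub_distrib]
            exact Finset.sum_congr rfl fun v _ => by ring
          have hu1x : ∑ v ∈ V₂, b v * u₁ v = u₁ x := by
            rw [← hbv, haffsum V₂ b hb1 u₁]
          rw [hexp, hu1x, hu12, j₂, sub_self]
        intro v hv hvb
        have h0 := (Finset.sum_eq_zero_iff_of_nonneg hnn).1 hsz v hv
        rcases mul_eq_zero.1 h0 with h | h
        · exact absurd h hvb
        · linarith
      set A : Finset (Fin d → ℝ) := V₁.filter (fun v => g₂ v = f v ∧ u₂ v = wgen v) with hAdef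
      set B : Finset (Fin d → ℝ) := V₂.filter (fun v => g₁ v = f v ∧ u₁ v = wgen v) with hBdef
      have hxA : x ∈ convexHull ℝ (A : Set (Fin d → ℝ)) := by
        have hzero : ∀ v ∈ V₁, v ∉ A → a v = 0 := by
          intro v hv hvA
          by_contra h
          exact hvA (Finset.mem_filter.2 ⟨hv, step1a v hv h, step2a v hv h⟩)
        have hsA : ∑ v ∈ A, a v = 1 := by
          rw [Finset.sum_subset (Finset.filter_subset _ _) hzero]
          exact ha1
        have hvA2 : ∑ v ∈ A, a v • v = x := by
          rw [Finset.sum_subset (Finset.filter_subset _ _)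
            (fun v hv hv' => by rw [hzero v hv hv', zero_smul])]
          exact hav
        rw [← hvA2]
        exact hhull A a (fun v hv => ha0 v (Finset.filter_subset _ _ hv)) hsA
      have hxB : x ∈ convexHull ℝ (B : Set (Fin d → ℝ)) := by
        have hzero : ∀ v ∈ V₂, v ∉ B → b v = 0 := by
          intro v hv hvB
          by_contra h
          exact hvB (Finset.mem_filter.2 ⟨hv, step1b v hv h, step2b v hv h⟩)
        have hsB : ∑ v ∈ B, b v = 1 := by
          rw [Finset.sum_subset (Finset.filter_subset _ _) hzero]
          exact hb1
        have hvB2 : ∑ v ∈ B, b v • v = x := by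
          rw [Finset.sum_subset (Finset.filter_subset _ _)
            (fun v hv hv' => by rw [hzero v hv hv', zero_smul])]
          exact hbv
        rw [← hvB2]
        exact hhull B b (fun v hv => hb0 v (Finset.filter_subset _ _ hv)) hsB
      set T : Finset (Fin d → ℝ) := V₀.filter (fun p => gm p = f p ∧ um p = wgen p) with hTdef
      have hTind := htight gm um
      have hAT : A ⊆ T := by
        intro v hv
        obtain ⟨hv1, e3, e4⟩ := Finset.mem_filter.1 hv
        obtain ⟨e1, e2⟩ := hA3 v hv1
        refine Finset.mem_filter.2 ⟨hV₁V hv1, ?_, ?_⟩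
        · rw [hgm, e1, e3]; ring
        · rw [hum, e2, e4]; ring
      have hBT : B ⊆ T := by
        intro v hv
        obtain ⟨hv1, e3, e4⟩ := Finset.mem_filter.1 hv
        obtain ⟨e1, e2⟩ := hB3 v hv1
        refine Finset.mem_filter.2 ⟨hV₂V hv1, ?_, ?_⟩
        · rw [hgm, e1, e3]; ring
        · rw [hum, e2, e4]; ring
      have hsub := hull_inter_of_affineIndependent T A B hAT hBT hTind ⟨hxA, hxB⟩
      have hABeq : A ∩ B = V₁ ∩ V₂ := by
        ext v
        simp only [hAdef, hBdef, Finset.mem_inter, Finset.mem_filter]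
        constructor
        · rintro ⟨⟨hh1, _⟩, hh2, _⟩
          exact ⟨hh1, hh2⟩
        · rintro ⟨hh1, hh2⟩
          exact ⟨⟨hh1, (hB3 v hh2).1, (hB3 v hh2).2⟩, ⟨hh2, (hA3 v hh1).1, (hA3 v hh1).2⟩⟩
      rwa [hABeq] at hsub
    · exact Set.subset_inter
        (convexHull_mono (Finset.coe_subset.2 Finset.inter_subset_left))
        (convexHull_mono (Finset.coe_subset.2 Finset.inter_subset_right))
  -- assemble
  refine ⟨hΩpoly, hconc, ?_, ?_, ?_⟩
  · -- PWL
    refine ⟨simp0.card,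
      fun i => convexHull ℝ ((↑(simp0.equivFin.symm i) : Finset (Fin d → ℝ)) : Set (Fin d → ℝ)),
      fun i => ⟨_, rfl⟩, ?_, ?_⟩
    · ext x
      simp only [Set.mem_iUnion]
      constructor
      · rintro ⟨i, hx⟩
        have hxin : x ∈ ⋃ V ∈ simp0, convexHull ℝ ((V : Finset (Fin d → ℝ)) : Set (Fin d → ℝ)) :=
          Set.mem_biUnion (simp0.equivFin.symm i).2 hx
        rw [hcovers] at hxin
        exact hxin
      · intro hx
        have hx' : x ∈ ⋃ V ∈ simp0, convexHull ℝ ((V : Finset (Fin d → ℝ)) : Set (Fin d → ℝ)) := by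
          rw [hcovers]; exact hx
        rw [Set.mem_iUnion₂] at hx'
        obtain ⟨W, hW, hxW⟩ := hx'
        refine ⟨simp0.equivFin ⟨W, hW⟩, ?_⟩
        rw [Equiv.symm_apply_apply]
        exact hxW
    · intro i
      obtain ⟨hWV, g, u, h1, h2, h3⟩ :=
        hWspec (↑(simp0.equivFin.symm i)) (simp0.equivFin.symm i).2
      refine ⟨g, fun x hx => ?_⟩
      obtain ⟨c, hc0, hc1, hcv⟩ := hrep _ x hx
      rw [← hcv, hinterp _ (simp0.equivFin.symm i).2 c hc0 hc1, haffsum _ c hc1 g]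
      exact Finset.sum_congr rfl fun v hv => by rw [(h3 v hv).1]
  · -- ContinuousOn
    by_cases hΩe : Ω = ∅
    · rw [hΩe]; exact continuousOn_empty f
    · obtain ⟨x₀, hx₀⟩ := Set.nonempty_iff_ne_empty.2 hΩe
      have hsne : simp0.Nonempty := by
        have hx' : x₀ ∈ ⋃ V ∈ simp0, convexHull ℝ ((V : Finset (Fin d → ℝ)) : Set (Fin d → ℝ)) := by
          rw [hcovers]; exact hx₀
        rw [Set.mem_iUnion₂] at hx'
        obtain ⟨W, hW, -⟩ := hx'
        exact ⟨W, hW⟩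
      set gc : Finset (Fin d → ℝ) → ((Fin d → ℝ) →ᵃ[ℝ] ℝ) := fun W =>
        if h : Pred W then h.choose else AffineMap.const ℝ (Fin d → ℝ) 0 with hgcdef
      have hgcspec : ∀ W, Pred W → (∀ p ∈ V₀, f p ≤ gc W p) ∧ (∀ v ∈ W, gc W v = f v) := by
        intro W h
        have : gc W = h.choose := by rw [hgcdef]; exact dif_pos h
        rw [this]
        obtain ⟨u, h1, h2, h3⟩ := h.choose_spec
        exact ⟨h1, fun v hv => (h3 v hv).1⟩
      have hcontinf : ∀ (s : Finset (Finset (Fin d → ℝ))) (hs : s.Nonempty),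
          Continuous (fun x => s.inf' hs (fun W => gc W x)) := by
        intro s hs
        induction hs using Finset.Nonempty.cons_induction with
        | singleton a =>
          simpa [Finset.inf'_singleton] using
            AffineMap.continuous_of_finiteDimensional (gc a)
        | cons a s ha hs ih =>
          have hc : Continuous (gc a) := AffineMap.continuous_of_finiteDimensional _
          have heq : (fun x => (Finset.cons a s ha).inf' (Finset.cons_nonempty ha)
                (fun W => gc W x))
              = fun x => min (gc a x) (s.inf' hs (fun W => gc W x)) := by
            funext x
            rw [Finset.inf'_cons]
          rw [heq]
          exact hc.min ih
      have heqon : Set.EqOn f (fun x => simp0.inf' hsne (fun W => gc W x)) Ω := by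
        intro x hx
        apply le_antisymm
        · apply Finset.le_inf'
          intro W hW
          exact hmaj (gc W) ((hgcspec W (hWspec W hW).2).1) x hx
        · have hx' : x ∈ ⋃ V ∈ simp0, convexHull ℝ ((V : Finset (Fin d → ℝ)) : Set (Fin d → ℝ)) := by
            rw [hcovers]; exact hx
          rw [Set.mem_iUnion₂] at hx'
          obtain ⟨W, hW, hxW⟩ := hx'
          obtain ⟨c, hc0, hc1, hcv⟩ := hrep W x hxW
          have hfx : f x = gc W x := by
            rw [← hcv, hinterp W hW c hc0 hc1, haffsum W c hc1 (gc W)]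
            exact Finset.sum_congr rfl fun v hv => by
              rw [(hgcspec W (hWspec W hW).2).2 v hv]
          rw [hfx]
          exact Finset.inf'_le _ hW
      exact ContinuousOn.congr ((hcontinf simp0 hsne).continuousOn) heqon
  refine ⟨{ simplices := simp0
            indep := ?_
            faces := ?_
            inter := hinter
            covers := hcovers }, ?_, ?_⟩
  · -- indep
    intro W hW
    obtain ⟨hWV, g, u, _, _, hg3⟩ := hWspec W hW
    refine AffineIndependent.mono (htight g u) ?_
    intro v hv
    exact Finset.mem_coe.2 (Finset.mem_filter.2
      ⟨hWV (Finset.mem_coe.1 hv), hg3 v (Finset.mem_coe.1 hv)⟩)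
  · -- faces
    intro W hW W' hW'
    obtain ⟨hWV, g, u, h1, h2, h3⟩ := hWspec W hW
    exact hWmk W' (fun p hp => hWV (hW' hp)) ⟨g, u, h1, h2, fun v hv => h3 v (hW' hv)⟩
  · -- interpolation
    intro W hW α h0 h1
    exact hinterp W hW α h0 h1
  · -- extreme points
    intro W hW v hv
    exact (hV₀lift v ((hWspec W hW).1 hv)).1
end

section
/- Let X be a finite set, π ∈ Δ(X), and let η be a finitely supported probability distribution on Δ(X). Then there exist a finite message set M and an experiment σ : X → Δ(M) that induces η from π if and only if π is the barycenter of η, i.e., π = Σ_{π̃ ∈ supp(η)} η(π̃) · π̃. -/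
open Finset

/-- A finitely supported distribution `η` (with support in `S`) over posteriors is
inducible from the prior `π` by an experiment `σ : X → Δ(M)` iff `π` is the
barycenter of `η`. -/
theorem inducible_iff_barycenter {X : Type} [Fintype X] [Nonempty X]
    (π : X → ℝ) (hπ : π ∈ stdSimplex ℝ X)
    (S : Finset (X → ℝ)) (η : (X → ℝ) → ℝ)
    (hS : ∀ q ∈ S, q ∈ stdSimplex ℝ X)
    (hη0 : ∀ q, 0 ≤ η q) (hsupp : ∀ q ∉ S, η q = 0) (hsum : (∑ q ∈ S, η q) = 1) :
    (∃ (M : Type) (_ : Fintype M) (σ : X → M → ℝ),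
      (∀ x, σ x ∈ stdSimplex ℝ M) ∧
      (∀ q : X → ℝ, η q = ∑ m : M,
        if q = (fun x => π x * σ x m / ∑ x', π x' * σ x' m)
        then (∑ x, σ x m * π x) else 0))
    ↔ π = ∑ q ∈ S, η q • q := by
  constructor
  · rintro ⟨M, _, σ, hσ, hind⟩
    funext x
    rw [Finset.sum_apply]
    simp only [Pi.smul_apply, smul_eq_mul]
    -- nonnegativity of terms in denominator sums
    have hterm : ∀ m (x' : X), 0 ≤ π x' * σ x' m := fun m x' =>
      mul_nonneg (hπ.1 x') ((hσ x').1 m)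
    have key : ∀ m (x : X),
        (∑ x', π x' * σ x' m) * (π x * σ x m / ∑ x', π x' * σ x' m) = π x * σ x m := by
      intro m x
      by_cases h : (∑ x', π x' * σ x' m) = 0
      · have h0 : π x * σ x m = 0 :=
          (Finset.sum_eq_zero_iff_of_nonneg (fun x' _ => hterm m x')).mp h x (Finset.mem_univ x)
        rw [h0, h]; ring
      · field_simp
    have hPP : ∀ m, (∑ x, σ x m * π x) = ∑ x', π x' * σ x' m := fun m =>
      Finset.sum_congr rfl fun _ _ => mul_comm _ _
    have hPzero : ∀ m, (fun x => π x * σ x m / ∑ x', π x' * σ x' m) ∉ S →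
        (∑ x', π x' * σ x' m) = 0 := by
      intro m hm
      have h0 : η (fun x => π x * σ x m / ∑ x', π x' * σ x' m) = 0 := hsupp _ hm
      rw [hind] at h0
      have hnn : ∀ m' : M, (0:ℝ) ≤
          if (fun x => π x * σ x m / ∑ x', π x' * σ x' m)
              = (fun x => π x * σ x m' / ∑ x', π x' * σ x' m')
          then (∑ x, σ x m' * π x) else 0 := by
        intro m'
        split
        · exact Finset.sum_nonneg fun x _ => mul_nonneg ((hσ x).1 m') (hπ.1 x)
        · exact le_refl 0
      have := (Finset.sum_eq_zero_iff_of_nonneg (fun m' _ => hnn m')).mp h0 m (Finset.mem_univ m)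
      simp only [if_pos rfl] at this
      rw [← hPP]; exact this
    symm
    calc ∑ q ∈ S, η q * q x
        = ∑ q ∈ S, ∑ m : M,
            (if q = (fun x => π x * σ x m / ∑ x', π x' * σ x' m)
             then (∑ x, σ x m * π x) * q x else 0) := by
          refine Finset.sum_congr rfl fun q _ => ?_
          rw [hind q, Finset.sum_mul]
          exact Finset.sum_congr rfl fun m _ => by rw [ite_mul, zero_mul]
      _ = ∑ m : M, ∑ q ∈ S,
            (if q = (fun x => π x * σ x m / ∑ x', π x' * σ x' m)
             then (∑ x, σ x m * π x) * q x else 0) := Finset.sum_comm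
      _ = ∑ m : M, π x * σ x m := by
          refine Finset.sum_congr rfl fun m _ => ?_
          rw [Finset.sum_ite_eq' S (fun x => π x * σ x m / ∑ x', π x' * σ x' m)
            (fun q => (∑ x, σ x m * π x) * q x)]
          split
          · rw [hPP]; exact key m x
          · have h0 : (∑ x', π x' * σ x' m) = 0 := hPzero m (by assumption)
            have : π x * σ x m = 0 :=
              (Finset.sum_eq_zero_iff_of_nonneg (fun x' _ => hterm m x')).mp h0 x
                (Finset.mem_univ x)
            rw [this]
      _ = π x := by rw [← Finset.mul_sum, (hσ x).2, mul_one]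
  · intro hbary
    have hpx : ∀ x, π x = ∑ q ∈ S, η q * q x := by
      intro x
      rw [hbary, Finset.sum_apply]
      simp [smul_eq_mul]
    have hzero : ∀ x, π x = 0 → ∀ q ∈ S, η q * q x = 0 := by
      intro x hx q hq
      refine (Finset.sum_eq_zero_iff_of_nonneg ?_).mp (by rw [← hpx x, hx]) q hq
      exact fun q' hq' => mul_nonneg (hη0 q') ((hS q' hq').1 x)
    refine ⟨{q // q ∈ S}, inferInstance,
      fun x m => if π x = 0 then η m.val else η m.val * m.val x / π x, ?_, ?_⟩
    · intro x
      constructor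
      · intro m
        dsimp only
        split
        · exact hη0 m.val
        · exact div_nonneg (mul_nonneg (hη0 m.val) ((hS m.val m.prop).1 x)) (hπ.1 x)
      · rw [Finset.sum_coe_sort S (fun q => if π x = 0 then η q else η q * q x / π x)]
        by_cases hx : π x = 0
        · simp [hx, hsum]
        · simp only [if_neg hx]
          rw [← Finset.sum_div, ← hpx x, div_self hx]
    · -- the induced distribution is η
      intro q
      set σ : X → {q // q ∈ S} → ℝ :=
        fun x m => if π x = 0 then η m.val else η m.val * m.val x / π x with hσdef
      have hkey : ∀ (m : {q // q ∈ S}) (x : X), σ x m * π x = η m.val * m.val x := by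
        intro m x
        by_cases hx : π x = 0
        · rw [hσdef]; simp only [if_pos hx, hx, mul_zero]
          exact (hzero x hx m.val m.prop).symm
        · rw [hσdef]; simp only [if_neg hx]
          rw [div_mul_cancel₀ _ hx]
      have hP : ∀ m : {q // q ∈ S}, (∑ x, σ x m * π x) = η m.val := by
        intro m
        calc (∑ x, σ x m * π x) = ∑ x, η m.val * m.val x :=
              Finset.sum_congr rfl fun x _ => hkey m x
          _ = η m.val * ∑ x, m.val x := by rw [Finset.mul_sum]
          _ = η m.val := by rw [(hS m.val m.prop).2, mul_one]
      have hP' : ∀ m : {q // q ∈ S}, (∑ x', π x' * σ x' m) = η m.val := by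
        intro m
        rw [← hP m]
        exact Finset.sum_congr rfl fun _ _ => mul_comm _ _
      have hpost : ∀ m : {q // q ∈ S}, η m.val ≠ 0 →
          (fun x => π x * σ x m / ∑ x', π x' * σ x' m) = m.val := by
        intro m hm
        funext x
        rw [hP' m, mul_comm, hkey m x, mul_comm, mul_div_assoc, div_self hm, mul_one]
      have hterm : ∀ m : {q // q ∈ S},
          (if q = (fun x => π x * σ x m / ∑ x', π x' * σ x' m)
            then (∑ x, σ x m * π x) else 0)
          = (if q = m.val then η m.val else 0) := by
        intro m
        by_cases hm : η m.val = 0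
        · rw [hP m, hm]
          simp
        · rw [hP m, hpost m hm]
      calc η q = ∑ m : {q // q ∈ S}, (if q = m.val then η m.val else 0) := by
            rw [Finset.sum_coe_sort S (fun q' => if q = q' then η q' else 0)]
            rw [Finset.sum_ite_eq S q η]
            by_cases hq : q ∈ S
            · rw [if_pos hq]
            · rw [if_neg hq, hsupp q hq]
        _ = ∑ m : {q // q ∈ S},
            (if q = (fun x => π x * σ x m / ∑ x', π x' * σ x' m)
              then (∑ x, σ x m * π x) else 0) :=
            Finset.sum_congr rfl fun m _ => (hterm m).symm
end

section
/- In the finite-horizon signal picking game described below, for every (pure) strategy profile g = (g^A, g^B), every time t ∈ {1, …, T}, and every history h_t^B that has positive probability under Pr^g, the conditional distribution of the state trajectory X_{1:t} given that history equals the strategy-independent belief μ_t^{*B}(h_t^B); likewise, for every history h_t^A with positive probability under Pr^g, the conditional distribution of X_{1:t} given h_t^A equals μ_t^{*A}(h_t^A). -/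
open Finset
open scoped Classical

/-! Finite-horizon signal picking game (time is 0-indexed: stages `0, 1, …, T-1`
correspond to stages `1, …, T` of the informal description). -/

/-- Prefix vectors: a choice of an element of `α s` for every stage `s < t`. -/
abbrev Pre (α : ℕ → Type) (t : ℕ) : Type := ∀ s : Fin t, α s

section SignalPicking

variable (X M U : ℕ → Type)

/-- An experiment at stage `t` is a kernel `σ_t : X_t → Δ(M_t)`, encoded as a matrix. -/
abbrev Sig (t : ℕ) : Type := X t → M t → ℝ

/-- The principal's history `h_t^A = (σ_{0:t-1}, m_{0:t-1}, u_{0:t-1})`. -/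
abbrev HistA (t : ℕ) : Type := Pre (Sig X M) t × Pre M t × Pre U t

/-- The receiver's history `h_t^B = (h_t^A, σ_t, m_t)`. -/
abbrev HistB (t : ℕ) : Type := HistA X M U t × Sig X M t × M t

/-- A (pure) strategy of the principal. -/
abbrev StratA : Type := ∀ t : ℕ, HistA X M U t → Sig X M t

/-- A (pure) strategy of the receiver. -/
abbrev StratB : Type := ∀ t : ℕ, HistB X M U t → U t

variable {X M U}

/-- The principal's history reached at stage `t` under the pure strategy profile
`(gA, gB)` when the realized messages are `mp`. -/
def reachA (gA : StratA X M U) (gB : StratB X M U) :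
    ∀ t : ℕ, Pre M t → HistA X M U t
  | 0, _ => (fun s => s.elim0, fun s => s.elim0, fun s => s.elim0)
  | t + 1, mp =>
    let h := reachA gA gB t (fun s => mp s.castSucc)
    let σ := gA t h
    let m := mp (Fin.last t)
    let u := gB t (h, σ, m)
    (Fin.snoc h.1 σ, Fin.snoc h.2.1 m, Fin.snoc h.2.2 u)

/-- The receiver's history reached at stage `t` (messages `m_{0:t}` realized). -/
def reachB (gA : StratA X M U) (gB : StratB X M U) (t : ℕ) (mp : Pre M (t + 1)) :
    HistB X M U t :=
  let h := reachA gA gB t (fun s => mp s.castSucc)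
  (h, gA t h, mp (Fin.last t))

/-- The action taken at stage `t` under `(gA, gB)` given messages `m_{0:t}`. -/
def actOf (gA : StratA X M U) (gB : StratB X M U) (t : ℕ) (mp : Pre M (t + 1)) : U t :=
  gB t (reachB gA gB t mp)

/-- Truncation of a length-`T` vector to a prefix of length `t ≤ T`. -/
def trunc {α : ℕ → Type} {T : ℕ} (v : Pre α T) (t : ℕ) (ht : t ≤ T) : Pre α t :=
  fun s => v ⟨s.1, lt_of_lt_of_le s.2 ht⟩

variable [∀ t, Fintype (X t)] [∀ t, Fintype (M t)]

/-- The probability under `Pr^g` of the trajectory `(x_{0:T-1}, m_{0:T-1})`: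
`π̂(x_0) · ∏_t σ_t(m_t | x_t) · ∏_{t<T-1} P_t(x_{t+1} | x_t, u_t)`, where the experiments
`σ_t` and actions `u_t` are the ones generated by the pure strategy profile `(gA, gB)`. -/
noncomputable def trajProb {T : ℕ} (hT : 0 < T) (phat : X 0 → ℝ)
    (P : ∀ t, X t → U t → X (t + 1) → ℝ)
    (gA : StratA X M U) (gB : StratB X M U)
    (x : Pre X T) (m : Pre M T) : ℝ :=
  phat (x ⟨0, hT⟩) *
    (∏ t : Fin T,
      gA t (reachA gA gB t (fun s : Fin t => m ⟨s.1, lt_trans s.2 t.2⟩)) (x t) (m t)) *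
    (∏ t : Fin T,
      if h : (t : ℕ) + 1 < T then
        P t (x t)
          (actOf gA gB t (fun s : Fin ((t : ℕ) + 1) =>
            m ⟨s.1, lt_of_le_of_lt (Nat.lt_succ_iff.mp s.2) t.2⟩))
          (x ⟨(t : ℕ) + 1, h⟩)
      else 1)

/-- The strategy-independent belief `μ_t^{*A} : H_t^A → Δ(X_{0:t})` of the principal,
defined recursively by the prior, Bayes updates and the transition kernels. -/
noncomputable def muA (phat : X 0 → ℝ) (P : ∀ t, X t → U t → X (t + 1) → ℝ) :
    ∀ t : ℕ, HistA X M U t → Pre X (t + 1) → ℝ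
  | 0, _, xs => phat (xs 0)
  | t + 1, h, xs =>
    let hA : HistA X M U t :=
      (fun s => h.1 s.castSucc, fun s => h.2.1 s.castSucc, fun s => h.2.2 s.castSucc)
    let σ := h.1 (Fin.last t)
    let m := h.2.1 (Fin.last t)
    let u := h.2.2 (Fin.last t)
    let xsp : Pre X (t + 1) := fun s => xs s.castSucc
    (muA phat P t hA xsp * σ (xsp (Fin.last t)) m /
        ∑ ys : Pre X (t + 1), muA phat P t hA ys * σ (ys (Fin.last t)) m) *
      P t (xs (Fin.last t).castSucc) u (xs (Fin.last (t + 1)))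

/-- The strategy-independent belief `μ_t^{*B} : H_t^B → Δ(X_{0:t})` of the receiver:
the Bayes update of `μ_t^{*A}` by the experiment `σ_t` and the message `m_t`. -/
noncomputable def muB (phat : X 0 → ℝ) (P : ∀ t, X t → U t → X (t + 1) → ℝ)
    (t : ℕ) (hb : HistB X M U t) : Pre X (t + 1) → ℝ :=
  fun xs =>
    muA phat P t hb.1 xs * hb.2.1 (xs (Fin.last t)) hb.2.2 /
      ∑ ys : Pre X (t + 1), muA phat P t hb.1 ys * hb.2.1 (ys (Fin.last t)) hb.2.2

section Aux

lemma snoc_mk_lt {α : ℕ → Type} {n : ℕ} (p : Pre α n) (a : α n) {i : ℕ} (h : i < n)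
    (h' : i < n + 1) : (Fin.snoc p a : Pre α (n + 1)) ⟨i, h'⟩ = p ⟨i, h⟩ :=
  @Fin.snoc_castSucc n (fun s : Fin (n + 1) => α s.1) a p ⟨i, h⟩

lemma snoc_mk_last {α : ℕ → Type} {n : ℕ} (p : Pre α n) (a : α n)
    (h' : n < n + 1) : (Fin.snoc p a : Pre α (n + 1)) ⟨n, h'⟩ = a :=
  @Fin.snoc_last n (fun s : Fin (n + 1) => α s.1) a p

lemma trunc_self {α : ℕ → Type} {T : ℕ} (v : Pre α T) (h : T ≤ T) : trunc v T h = v := rfl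

lemma trunc_init {α : ℕ → Type} {T t : ℕ} (v : Pre α T) (h : t + 1 ≤ T) (hle : t ≤ T) :
    Fin.init (trunc v (t + 1) h) = trunc v t hle := rfl

lemma trunc_succ {α : ℕ → Type} {T t : ℕ} (v : Pre α T) (h : t + 1 ≤ T) (hle : t ≤ T) :
    trunc v (t + 1) h = Fin.snoc (trunc v t hle) (v ⟨t, h⟩) := by
  funext s
  rcases s with ⟨i, hi⟩
  rcases Nat.lt_or_ge i t with hit | hit
  · rw [snoc_mk_lt _ _ hit]; rfl
  · have hit' : i = t := by omega
    subst hit'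
    rw [snoc_mk_last]; rfl

lemma sum_trunc_split {α : ℕ → Type} [∀ t, Fintype (α t)] {T t : ℕ} (h : t + 1 ≤ T)
    (hle : t ≤ T) (f : Pre α T → ℝ) (p : Pre α t) :
    ∑ v : Pre α T, (if trunc v t hle = p then f v else 0)
      = ∑ a : α t, ∑ v : Pre α T, (if trunc v (t + 1) h = Fin.snoc p a then f v else 0) := by
  rw [Finset.sum_comm]
  apply Finset.sum_congr rfl
  intro v _
  rcases eq_or_ne (trunc v t hle) p with hv | hv
  · rw [if_pos hv]
    have hiff : ∀ a : α t, (trunc v (t + 1) h = Fin.snoc p a) ↔ a = v ⟨t, h⟩ := by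
      intro a
      constructor
      · intro he
        have := congrFun he (Fin.last t)
        rw [Fin.snoc_last] at this
        exact this.symm
      · intro he
        rw [he, trunc_succ v h hle, hv]
    simp_rw [hiff]
    simp
  · have hall : ∀ a : α t, ¬ (trunc v (t + 1) h = Fin.snoc p a) := by
      intro a he
      apply hv
      have := congrArg Fin.init he
      rwa [trunc_init v h hle, Fin.init_snoc] at this
    rw [if_neg hv]
    simp [hall]

lemma sum_snoc {α : ℕ → Type} [∀ t, Fintype (α t)] {n : ℕ} (F : Pre α (n + 1) → ℝ) :
    ∑ v : Pre α (n + 1), F v = ∑ a : α n, ∑ p : Pre α n, F (Fin.snoc p a) := by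
  calc ∑ v : Pre α (n + 1), F v
      = ∑ pr : α n × Pre α n, F (Fin.snoc pr.2 pr.1) :=
        (Fintype.sum_equiv (Fin.snocEquiv (fun s : Fin (n + 1) => α s.1))
          (fun pr => F (Fin.snoc pr.2 pr.1)) F (fun pr => rfl)).symm
    _ = ∑ a : α n, ∑ p : Pre α n, F (Fin.snoc p a) := Fintype.sum_prod_type _

lemma sum_partition {α : ℕ → Type} [∀ t, Fintype (α t)] {T t : ℕ} (h : t ≤ T)
    (f : Pre α T → ℝ) (v : Pre α T) :
    f v = ∑ p : Pre α t, (if trunc v t h = p then f v else 0) := by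
  simp

lemma ite_and_swap {p q : Prop} [Decidable p] [Decidable q] (r : ℝ) :
    (if p ∧ q then r else 0) = if q then (if p then r else 0) else 0 := by
  by_cases hp : p <;> by_cases hq : q <;> simp [hp, hq]

lemma ite_and_left {p q : Prop} [Decidable p] [Decidable q] (r : ℝ) :
    (if p ∧ q then r else 0) = if p then (if q then r else 0) else 0 := by
  by_cases hp : p <;> by_cases hq : q <;> simp [hp, hq]

lemma sum_ite_const {β : Type*} [Fintype β] {p : Prop} [Decidable p] (A : β → ℝ) :
    ∑ b : β, (if p then A b else 0) = if p then (∑ b : β, A b) else 0 := by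
  split <;> simp

end Aux
section Core

variable {X M U : ℕ → Type}

/-- Unnormalized prefix probability of `(x_{0:t}, m_{0:t-1})` under the strategy profile. -/
noncomputable def Geq (phat : X 0 → ℝ) (P : ∀ t, X t → U t → X (t + 1) → ℝ)
    (gA : StratA X M U) (gB : StratB X M U) (t : ℕ)
    (xb : Pre X (t + 1)) (mb : Pre M t) : ℝ :=
  phat (xb ⟨0, Nat.succ_pos t⟩) *
    (∏ s : Fin t,
      gA s (reachA gA gB s (fun r : Fin s => mb ⟨r.1, lt_trans r.2 s.2⟩))
        (xb s.castSucc) (mb s)) *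
    (∏ s : Fin t,
      P s (xb s.castSucc)
        (actOf gA gB s (fun r : Fin (s.1 + 1) =>
          mb ⟨r.1, lt_of_le_of_lt (Nat.lt_succ_iff.mp r.2) s.2⟩))
        (xb s.succ))

/-- Unnormalized belief given a history, defined recursively in parallel with `muA`. -/
noncomputable def Dfun (phat : X 0 → ℝ) (P : ∀ t, X t → U t → X (t + 1) → ℝ) :
    ∀ t : ℕ, HistA X M U t → Pre X (t + 1) → ℝ
  | 0, _, xs => phat (xs 0)
  | t + 1, h, xs =>
    Dfun phat P t
        (fun s => h.1 s.castSucc, fun s => h.2.1 s.castSucc, fun s => h.2.2 s.castSucc)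
        (fun s => xs s.castSucc) *
      h.1 (Fin.last t) (xs (Fin.last t).castSucc) (h.2.1 (Fin.last t)) *
      P t (xs (Fin.last t).castSucc) (h.2.2 (Fin.last t)) (xs (Fin.last (t + 1)))

lemma reachA_succ (gA : StratA X M U) (gB : StratB X M U) (t : ℕ) (mp : Pre M (t + 1)) :
    reachA gA gB (t + 1) mp =
      (Fin.snoc (reachA gA gB t fun s => mp s.castSucc).1
          (gA t (reachA gA gB t fun s => mp s.castSucc)),
       Fin.snoc (reachA gA gB t fun s => mp s.castSucc).2.1 (mp (Fin.last t)),
       Fin.snoc (reachA gA gB t fun s => mp s.castSucc).2.2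
          (gB t (reachA gA gB t fun s => mp s.castSucc,
            gA t (reachA gA gB t fun s => mp s.castSucc), mp (Fin.last t)))) := rfl

lemma reachA_snd (gA : StratA X M U) (gB : StratB X M U) :
    ∀ (t : ℕ) (mp : Pre M t), (reachA gA gB t mp).2.1 = mp
  | 0, mp => funext fun s => s.elim0
  | t + 1, mp => by
    show (Fin.snoc (reachA gA gB t fun s => mp s.castSucc).2.1 (mp (Fin.last t)) :
      Pre M (t + 1)) = mp
    rw [reachA_snd gA gB t]
    exact Fin.snoc_init_self mp

lemma reachA_trunc (gA : StratA X M U) (gB : StratB X M U) (t : ℕ) (mp : Pre M (t + 1)) :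
    ((fun s : Fin t => (reachA gA gB (t + 1) mp).1 s.castSucc,
      fun s : Fin t => (reachA gA gB (t + 1) mp).2.1 s.castSucc,
      fun s : Fin t => (reachA gA gB (t + 1) mp).2.2 s.castSucc) : HistA X M U t)
      = reachA gA gB t (fun s => mp s.castSucc) := by
  rw [reachA_succ]
  refine Prod.ext ?_ (Prod.ext ?_ ?_) <;>
    · funext s
      simp

end Core
section Core2

variable {X M U : ℕ → Type}

lemma Geq_succ (phat : X 0 → ℝ) (P : ∀ t, X t → U t → X (t + 1) → ℝ)
    (gA : StratA X M U) (gB : StratB X M U) (t : ℕ)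
    (xb : Pre X (t + 2)) (mb : Pre M (t + 1)) :
    Geq phat P gA gB (t + 1) xb mb
      = Geq phat P gA gB t (Fin.init xb) (Fin.init mb) *
          gA t (reachA gA gB t (Fin.init mb)) (xb (Fin.last t).castSucc) (mb (Fin.last t)) *
          P t (xb (Fin.last t).castSucc) (actOf gA gB t mb) (xb (Fin.last (t + 1))) := by
  have eph : phat (xb ⟨0, Nat.succ_pos (t + 1)⟩) = phat ((Fin.init xb) ⟨0, Nat.succ_pos t⟩) :=
    rfl
  have eA : (∏ s : Fin (t + 1),
        gA s (reachA gA gB s (fun r : Fin s => mb ⟨r.1, lt_trans r.2 s.2⟩))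
          (xb s.castSucc) (mb s))
      = (∏ s : Fin t,
          gA s (reachA gA gB s (fun r : Fin s => (Fin.init mb) ⟨r.1, lt_trans r.2 s.2⟩))
            ((Fin.init xb) s.castSucc) ((Fin.init mb) s)) *
        gA t (reachA gA gB t (Fin.init mb)) (xb (Fin.last t).castSucc) (mb (Fin.last t)) := by
    rw [Fin.prod_univ_castSucc]
    rfl
  have eB : (∏ s : Fin (t + 1),
        P s (xb s.castSucc)
          (actOf gA gB s (fun r : Fin (s.1 + 1) =>
            mb ⟨r.1, lt_of_le_of_lt (Nat.lt_succ_iff.mp r.2) s.2⟩))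
          (xb s.succ))
      = (∏ s : Fin t,
          P s ((Fin.init xb) s.castSucc)
            (actOf gA gB s (fun r : Fin (s.1 + 1) =>
              (Fin.init mb) ⟨r.1, lt_of_le_of_lt (Nat.lt_succ_iff.mp r.2) s.2⟩))
            ((Fin.init xb) s.succ)) *
        P t (xb (Fin.last t).castSucc) (actOf gA gB t mb) (xb (Fin.last (t + 1))) := by
    rw [Fin.prod_univ_castSucc]
    rfl
  unfold Geq
  rw [eph, eA, eB]
  ring

lemma trajProb_eq (phat : X 0 → ℝ) (P : ∀ t, X t → U t → X (t + 1) → ℝ)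
    (gA : StratA X M U) (gB : StratB X M U) (t : ℕ) (hT : 0 < t + 1)
    (x : Pre X (t + 1)) (m : Pre M (t + 1)) :
    trajProb hT phat P gA gB x m
      = Geq phat P gA gB t x (Fin.init m) *
          gA t (reachA gA gB t (Fin.init m)) (x (Fin.last t)) (m (Fin.last t)) := by
  have eph : phat (x ⟨0, hT⟩) = phat (x ⟨0, Nat.succ_pos t⟩) := rfl
  have eA : (∏ s : Fin (t + 1),
        gA s (reachA gA gB s (fun r : Fin s => m ⟨r.1, lt_trans r.2 s.2⟩)) (x s) (m s))
      = (∏ s : Fin t,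
          gA s (reachA gA gB s (fun r : Fin s => (Fin.init m) ⟨r.1, lt_trans r.2 s.2⟩))
            (x s.castSucc) ((Fin.init m) s)) *
        gA t (reachA gA gB t (Fin.init m)) (x (Fin.last t)) (m (Fin.last t)) := by
    rw [Fin.prod_univ_castSucc]
    rfl
  have eB : (∏ s : Fin (t + 1),
        if h : (s : ℕ) + 1 < t + 1 then
          P s (x s)
            (actOf gA gB s (fun r : Fin ((s : ℕ) + 1) =>
              m ⟨r.1, lt_of_le_of_lt (Nat.lt_succ_iff.mp r.2) s.2⟩))
            (x ⟨(s : ℕ) + 1, h⟩)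
        else 1)
      = ∏ s : Fin t,
          P s (x s.castSucc)
            (actOf gA gB s (fun r : Fin (s.1 + 1) =>
              (Fin.init m) ⟨r.1, lt_of_le_of_lt (Nat.lt_succ_iff.mp r.2) s.2⟩))
            (x s.succ) := by
    rw [Fin.prod_univ_castSucc]
    rw [dif_neg (show ¬(((Fin.last t : Fin (t + 1)) : ℕ) + 1 < t + 1) by simp), mul_one]
    apply Finset.prod_congr rfl
    intro s _
    have hc : ((s.castSucc : Fin (t + 1)) : ℕ) + 1 < t + 1 := by
      simp only [Fin.coe_castSucc]
      exact Nat.succ_lt_succ s.2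
    rw [dif_pos hc]
    rfl
  unfold trajProb Geq
  rw [eph, eA, eB]
  ring

lemma reachA_trunc' (gA : StratA X M U) (gB : StratB X M U) (t : ℕ) (mp : Pre M (t + 1)) :
    ((fun s : Fin t => (reachA gA gB (t + 1) mp).1 s.castSucc,
      fun s : Fin t => (reachA gA gB (t + 1) mp).2.1 s.castSucc,
      fun s : Fin t => (reachA gA gB (t + 1) mp).2.2 s.castSucc) : HistA X M U t)
      = reachA gA gB t (Fin.init mp) :=
  reachA_trunc gA gB t mp

lemma reachA_last_sig (gA : StratA X M U) (gB : StratB X M U) (t : ℕ) (mp : Pre M (t + 1)) :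
    (reachA gA gB (t + 1) mp).1 (Fin.last t) = gA t (reachA gA gB t (Fin.init mp)) := by
  rw [reachA_succ]
  simp [Fin.init, actOf, reachB]
  try rfl

lemma reachA_last_msg (gA : StratA X M U) (gB : StratB X M U) (t : ℕ) (mp : Pre M (t + 1)) :
    (reachA gA gB (t + 1) mp).2.1 (Fin.last t) = mp (Fin.last t) := by
  rw [reachA_succ]
  simp [Fin.init, actOf, reachB]
  try rfl

lemma reachA_last_act (gA : StratA X M U) (gB : StratB X M U) (t : ℕ) (mp : Pre M (t + 1)) :
    (reachA gA gB (t + 1) mp).2.2 (Fin.last t) = actOf gA gB t mp := by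
  rw [reachA_succ]
  simp [Fin.init, actOf, reachB]
  try rfl

lemma Dfun_succ (phat : X 0 → ℝ) (P : ∀ t, X t → U t → X (t + 1) → ℝ)
    (gA : StratA X M U) (gB : StratB X M U) (t : ℕ) (mp : Pre M (t + 1))
    (xb : Pre X (t + 2)) :
    Dfun phat P (t + 1) (reachA gA gB (t + 1) mp) xb
      = Dfun phat P t (reachA gA gB t (Fin.init mp)) (Fin.init xb) *
          gA t (reachA gA gB t (Fin.init mp)) (xb (Fin.last t).castSucc)
            (mp (Fin.last t)) *
          P t (xb (Fin.last t).castSucc) (actOf gA gB t mp) (xb (Fin.last (t + 1))) := by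
  simp only [Dfun]
  rw [reachA_trunc', reachA_last_sig, reachA_last_msg, reachA_last_act]
  rfl

lemma Geq_eq_Dfun (phat : X 0 → ℝ) (P : ∀ t, X t → U t → X (t + 1) → ℝ)
    (gA : StratA X M U) (gB : StratB X M U) :
    ∀ (t : ℕ) (mp : Pre M t) (xb : Pre X (t + 1)),
      Geq phat P gA gB t xb mp = Dfun phat P t (reachA gA gB t mp) xb
  | 0, mp, xb => by
    simp [Geq, Dfun]
  | t + 1, mp, xb => by
    rw [Geq_succ, Dfun_succ, Geq_eq_Dfun phat P gA gB t (Fin.init mp) (Fin.init xb)]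

end Core2
section Core3

variable {X M U : ℕ → Type} [∀ t, Fintype (X t)] [∀ t, Fintype (M t)]

lemma Geq_nonneg (phat : X 0 → ℝ) (P : ∀ t, X t → U t → X (t + 1) → ℝ)
    (gA : StratA X M U) (gB : StratB X M U)
    (hphat : phat ∈ stdSimplex ℝ (X 0))
    (hP : ∀ t x u, P t x u ∈ stdSimplex ℝ (X (t + 1)))
    (hgA : ∀ t h x, gA t h x ∈ stdSimplex ℝ (M t))
    (t : ℕ) (xb : Pre X (t + 1)) (mb : Pre M t) :
    0 ≤ Geq phat P gA gB t xb mb := by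
  refine mul_nonneg (mul_nonneg (hphat.1 _) ?_) ?_
  · exact Finset.prod_nonneg fun s _ => (hgA _ _ _).1 _
  · exact Finset.prod_nonneg fun s _ => (hP _ _ _).1 _

lemma Dfun_nonneg (phat : X 0 → ℝ) (P : ∀ t, X t → U t → X (t + 1) → ℝ)
    (gA : StratA X M U) (gB : StratB X M U)
    (hphat : phat ∈ stdSimplex ℝ (X 0))
    (hP : ∀ t x u, P t x u ∈ stdSimplex ℝ (X (t + 1)))
    (hgA : ∀ t h x, gA t h x ∈ stdSimplex ℝ (M t))
    (t : ℕ) (mp : Pre M t) (xb : Pre X (t + 1)) :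
    0 ≤ Dfun phat P t (reachA gA gB t mp) xb := by
  rw [← Geq_eq_Dfun]
  exact Geq_nonneg phat P gA gB hphat hP hgA t xb mp

lemma muA_succ (phat : X 0 → ℝ) (P : ∀ t, X t → U t → X (t + 1) → ℝ)
    (gA : StratA X M U) (gB : StratB X M U) (t : ℕ) (mp : Pre M (t + 1))
    (xs : Pre X (t + 2)) :
    muA phat P (t + 1) (reachA gA gB (t + 1) mp) xs
      = (muA phat P t (reachA gA gB t (Fin.init mp)) (Fin.init xs) *
            gA t (reachA gA gB t (Fin.init mp)) (xs (Fin.last t).castSucc)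
              (mp (Fin.last t)) /
          ∑ ys : Pre X (t + 1),
            muA phat P t (reachA gA gB t (Fin.init mp)) ys *
              gA t (reachA gA gB t (Fin.init mp)) (ys (Fin.last t)) (mp (Fin.last t))) *
        P t (xs (Fin.last t).castSucc) (actOf gA gB t mp) (xs (Fin.last (t + 1))) := by
  simp only [muA]
  rw [reachA_trunc', reachA_last_sig, reachA_last_msg, reachA_last_act]
  rfl

lemma double_split {T t : ℕ} (h2 : t + 1 ≤ T) (h1 : t ≤ T)
    (f : Pre X T → Pre M T → ℝ) (xb : Pre X t) (mh : Pre M t) :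
    (∑ x : Pre X T, ∑ m : Pre M T,
        if trunc x t h1 = xb ∧ trunc m t h1 = mh then f x m else 0)
      = ∑ a : X t, ∑ b : M t, ∑ x : Pre X T, ∑ m : Pre M T,
          if trunc x (t + 1) h2 = Fin.snoc xb a ∧ trunc m (t + 1) h2 = Fin.snoc mh b
          then f x m else 0 := by
  calc (∑ x : Pre X T, ∑ m : Pre M T,
        if trunc x t h1 = xb ∧ trunc m t h1 = mh then f x m else 0)
      = ∑ x : Pre X T, (if trunc x t h1 = xb then
          (∑ m : Pre M T, if trunc m t h1 = mh then f x m else 0) else 0) := by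
        refine Finset.sum_congr rfl fun x _ => ?_
        simp_rw [ite_and_left]
        exact sum_ite_const _
    _ = ∑ a : X t, ∑ x : Pre X T, (if trunc x (t + 1) h2 = Fin.snoc xb a then
          (∑ m : Pre M T, if trunc m t h1 = mh then f x m else 0) else 0) :=
        sum_trunc_split h2 h1 _ xb
    _ = ∑ a : X t, ∑ x : Pre X T, ∑ b : M t, ∑ m : Pre M T,
          if trunc x (t + 1) h2 = Fin.snoc xb a ∧ trunc m (t + 1) h2 = Fin.snoc mh b
          then f x m else 0 := by
        refine Finset.sum_congr rfl fun a _ => Finset.sum_congr rfl fun x _ => ?_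
        rw [sum_trunc_split h2 h1 (fun m => f x m) mh, ← sum_ite_const]
        refine Finset.sum_congr rfl fun b _ => ?_
        rw [← sum_ite_const]
        refine Finset.sum_congr rfl fun m _ => ?_
        rw [← ite_and_left]
    _ = ∑ a : X t, ∑ b : M t, ∑ x : Pre X T, ∑ m : Pre M T,
          if trunc x (t + 1) h2 = Fin.snoc xb a ∧ trunc m (t + 1) h2 = Fin.snoc mh b
          then f x m else 0 := by
        exact Finset.sum_congr rfl fun a _ => Finset.sum_comm

end Core3
section Core4

variable {X M U : ℕ → Type} [∀ t, Fintype (X t)] [∀ t, Fintype (M t)]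

set_option linter.unusedSectionVars false

lemma marg {T : ℕ} (hT : 0 < T) (phat : X 0 → ℝ)
    (P : ∀ t, X t → U t → X (t + 1) → ℝ)
    (gA : StratA X M U) (gB : StratB X M U)
    (hgA : ∀ t h x, gA t h x ∈ stdSimplex ℝ (M t))
    (hP : ∀ t x u, P t x u ∈ stdSimplex ℝ (X (t + 1))) :
    ∀ (k t : ℕ) (ht : t + 1 ≤ T), t + 1 + k = T →
      ∀ (xb : Pre X (t + 1)) (mh : Pre M (t + 1)),
      (∑ x : Pre X T, ∑ m : Pre M T,
          if trunc x (t + 1) ht = xb ∧ trunc m (t + 1) ht = mh then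
            trajProb hT phat P gA gB x m else 0)
        = Geq phat P gA gB t xb (Fin.init mh) *
            gA t (reachA gA gB t (Fin.init mh)) (xb (Fin.last t)) (mh (Fin.last t)) := by
  intro k
  induction k with
  | zero =>
    intro t ht hk xb mh
    have hTt : T = t + 1 := by omega
    subst hTt
    simp only [trunc_self]
    have e1 : ∀ x : Pre X (t + 1),
        (∑ m : Pre M (t + 1), if x = xb ∧ m = mh then trajProb hT phat P gA gB x m else 0)
          = if x = xb then trajProb hT phat P gA gB x mh else 0 := by
      intro x
      simp_rw [ite_and_left]
      rw [sum_ite_const, Finset.sum_ite_eq' Finset.univ mh]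
      simp
    refine (Finset.sum_congr rfl fun x _ => e1 x).trans ?_
    rw [Finset.sum_ite_eq' Finset.univ xb]
    simp only [Finset.mem_univ, if_true]
    exact trajProb_eq phat P gA gB t hT xb mh
  | succ k ih =>
    intro t ht hk xb mh
    have ht' : t + 1 + 1 ≤ T := by omega
    have hk' : t + 1 + 1 + k = T := by omega
    rw [double_split ht' ht]
    have e2 : ∀ (a : X (t + 1)) (b : M (t + 1)),
        (∑ x : Pre X T, ∑ m : Pre M T,
            if trunc x (t + 1 + 1) ht' = Fin.snoc xb a ∧
                trunc m (t + 1 + 1) ht' = Fin.snoc mh b then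
              trajProb hT phat P gA gB x m else 0)
          = Geq phat P gA gB (t + 1) (Fin.snoc xb a) mh *
              gA (t + 1) (reachA gA gB (t + 1) mh) a b := by
      intro a b
      rw [ih (t + 1) ht' hk' (Fin.snoc xb a) (Fin.snoc mh b)]
      rw [Fin.init_snoc, Fin.snoc_last, Fin.snoc_last]
    simp_rw [e2]
    have e3 : ∀ a : X (t + 1),
        (∑ b : M (t + 1),
            Geq phat P gA gB (t + 1) (Fin.snoc xb a) mh *
              gA (t + 1) (reachA gA gB (t + 1) mh) a b)
          = Geq phat P gA gB (t + 1) (Fin.snoc xb a) mh := by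
      intro a
      rw [← Finset.mul_sum, (hgA (t + 1) (reachA gA gB (t + 1) mh) a).2, mul_one]
    simp_rw [e3]
    have e4 : ∀ a : X (t + 1),
        Geq phat P gA gB (t + 1) (Fin.snoc xb a) mh
          = Geq phat P gA gB t xb (Fin.init mh) *
              gA t (reachA gA gB t (Fin.init mh)) (xb (Fin.last t)) (mh (Fin.last t)) *
              P t (xb (Fin.last t)) (actOf gA gB t mh) a := by
      intro a
      rw [Geq_succ, Fin.init_snoc]
      rw [show (Fin.snoc xb a : Pre X (t + 2)) (Fin.last t).castSucc = xb (Fin.last t) from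
        Fin.snoc_castSucc _ _ _]
      rw [show (Fin.snoc xb a : Pre X (t + 2)) (Fin.last (t + 1)) = a from
        Fin.snoc_last _ _]
    simp_rw [e4]
    rw [← Finset.mul_sum, (hP t (xb (Fin.last t)) (actOf gA gB t mh)).2, mul_one]

end Core4
section Core5

variable {X M U : ℕ → Type} [∀ t, Fintype (X t)] [∀ t, Fintype (M t)]

set_option linter.unusedSectionVars false

lemma muA_key (phat : X 0 → ℝ) (P : ∀ t, X t → U t → X (t + 1) → ℝ)
    (gA : StratA X M U) (gB : StratB X M U)
    (hphat : phat ∈ stdSimplex ℝ (X 0))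
    (hP : ∀ t x u, P t x u ∈ stdSimplex ℝ (X (t + 1)))
    (hgA : ∀ t h x, gA t h x ∈ stdSimplex ℝ (M t)) :
    ∀ (t : ℕ) (mp : Pre M t),
      0 < (∑ ys : Pre X (t + 1), Dfun phat P t (reachA gA gB t mp) ys) →
      ∀ xs : Pre X (t + 1),
        Dfun phat P t (reachA gA gB t mp) xs
          = muA phat P t (reachA gA gB t mp) xs *
              ∑ ys : Pre X (t + 1), Dfun phat P t (reachA gA gB t mp) ys
  | 0, mp => by
    intro _ xs
    have hsum : (∑ ys : Pre X 1, Dfun phat P 0 (reachA gA gB 0 mp) ys) = 1 := by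
      simp only [Dfun]
      calc (∑ ys : Pre X 1, phat (ys 0))
          = ∑ x : X 0, phat x :=
            Fintype.sum_equiv (Equiv.piUnique (fun s : Fin 1 => X s.1))
              (fun ys => phat (ys 0)) phat (fun ys => rfl)
        _ = 1 := hphat.2
    rw [hsum, mul_one]
    rfl
  | t + 1, mp => by
    intro hpos xs
    have hsum : (∑ ys : Pre X (t + 2), Dfun phat P (t + 1) (reachA gA gB (t + 1) mp) ys)
        = ∑ yb : Pre X (t + 1),
            Dfun phat P t (reachA gA gB t (Fin.init mp)) yb *
              gA t (reachA gA gB t (Fin.init mp)) (yb (Fin.last t)) (mp (Fin.last t)) := by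
      rw [sum_snoc (fun v => Dfun phat P (t + 1) (reachA gA gB (t + 1) mp) v)]
      have e1 : ∀ (a : X (t + 1)) (p : Pre X (t + 1)),
          Dfun phat P (t + 1) (reachA gA gB (t + 1) mp) (Fin.snoc p a)
            = Dfun phat P t (reachA gA gB t (Fin.init mp)) p *
                gA t (reachA gA gB t (Fin.init mp)) (p (Fin.last t)) (mp (Fin.last t)) *
                P t (p (Fin.last t)) (actOf gA gB t mp) a := by
        intro a p
        rw [Dfun_succ, Fin.init_snoc]
        rw [show (Fin.snoc p a : Pre X (t + 2)) (Fin.last t).castSucc = p (Fin.last t) from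
          Fin.snoc_castSucc _ _ _]
        rw [show (Fin.snoc p a : Pre X (t + 2)) (Fin.last (t + 1)) = a from
          Fin.snoc_last _ _]
      simp_rw [e1]
      rw [Finset.sum_comm]
      refine Finset.sum_congr rfl fun p _ => ?_
      rw [← Finset.mul_sum, (hP t (p (Fin.last t)) (actOf gA gB t mp)).2, mul_one]
    rw [hsum] at hpos
    have hN : 0 < ∑ yb : Pre X (t + 1), Dfun phat P t (reachA gA gB t (Fin.init mp)) yb := by
      obtain ⟨yb, -, hyb⟩ := Finset.exists_lt_of_sum_lt
        (show (∑ _yb : Pre X (t + 1), (0 : ℝ)) < _ by simpa using hpos)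
      have hD0 : 0 ≤ Dfun phat P t (reachA gA gB t (Fin.init mp)) yb :=
        Dfun_nonneg phat P gA gB hphat hP hgA t (Fin.init mp) yb
      have hg0 : 0 ≤ gA t (reachA gA gB t (Fin.init mp)) (yb (Fin.last t)) (mp (Fin.last t)) :=
        (hgA _ _ _).1 _
      have hDpos : 0 < Dfun phat P t (reachA gA gB t (Fin.init mp)) yb := by
        rcases mul_pos_iff.mp hyb with ⟨h1, _⟩ | ⟨_, h2⟩
        · exact h1
        · linarith
      exact Finset.sum_pos'
        (fun y _ => Dfun_nonneg phat P gA gB hphat hP hgA t (Fin.init mp) y)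
        ⟨yb, Finset.mem_univ yb, hDpos⟩
    have IH := muA_key phat P gA gB hphat hP hgA t (Fin.init mp) hN
    have hNne : (∑ yb : Pre X (t + 1), Dfun phat P t (reachA gA gB t (Fin.init mp)) yb) ≠ 0 :=
      ne_of_gt hN
    have hmuA : ∀ y : Pre X (t + 1),
        muA phat P t (reachA gA gB t (Fin.init mp)) y
          = Dfun phat P t (reachA gA gB t (Fin.init mp)) y /
              ∑ yb : Pre X (t + 1), Dfun phat P t (reachA gA gB t (Fin.init mp)) yb := by
      intro y
      rw [IH y]
      field_simp
    have hden : (∑ ys : Pre X (t + 1),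
        muA phat P t (reachA gA gB t (Fin.init mp)) ys *
          gA t (reachA gA gB t (Fin.init mp)) (ys (Fin.last t)) (mp (Fin.last t)))
        = (∑ yb : Pre X (t + 1),
            Dfun phat P t (reachA gA gB t (Fin.init mp)) yb *
              gA t (reachA gA gB t (Fin.init mp)) (yb (Fin.last t)) (mp (Fin.last t))) /
          ∑ yb : Pre X (t + 1), Dfun phat P t (reachA gA gB t (Fin.init mp)) yb := by
      simp_rw [hmuA, div_mul_eq_mul_div]
      rw [← Finset.sum_div]
    have hNσne : (∑ yb : Pre X (t + 1),
        Dfun phat P t (reachA gA gB t (Fin.init mp)) yb *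
          gA t (reachA gA gB t (Fin.init mp)) (yb (Fin.last t)) (mp (Fin.last t))) ≠ 0 :=
      ne_of_gt hpos
    rw [Dfun_succ, muA_succ, hsum, hden, hmuA (Fin.init xs)]
    field_simp
    try ring
  termination_by t => t

end Core5
section Core6

variable {X M U : ℕ → Type} [∀ t, Fintype (X t)] [∀ t, Fintype (M t)]

set_option linter.unusedSectionVars false

lemma split_m {T t tx : ℕ} (h2 : t + 1 ≤ T) (h1 : t ≤ T) (hx : tx ≤ T)
    (f : Pre X T → Pre M T → ℝ) (xb : Pre X tx) (mh : Pre M t) :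
    (∑ x : Pre X T, ∑ m : Pre M T,
        if trunc x tx hx = xb ∧ trunc m t h1 = mh then f x m else 0)
      = ∑ b : M t, ∑ x : Pre X T, ∑ m : Pre M T,
          if trunc x tx hx = xb ∧ trunc m (t + 1) h2 = Fin.snoc mh b then f x m else 0 := by
  have e : ∀ x : Pre X T,
      (∑ m : Pre M T, if trunc x tx hx = xb ∧ trunc m t h1 = mh then f x m else 0)
        = ∑ b : M t, ∑ m : Pre M T,
            if trunc x tx hx = xb ∧ trunc m (t + 1) h2 = Fin.snoc mh b then f x m else 0 := by
    intro x
    simp_rw [ite_and_left]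
    rw [sum_ite_const, sum_trunc_split h2 h1 (fun m => f x m) mh, ← sum_ite_const]
    refine Finset.sum_congr rfl fun b _ => ?_
    rw [← sum_ite_const]
  calc (∑ x : Pre X T, ∑ m : Pre M T,
        if trunc x tx hx = xb ∧ trunc m t h1 = mh then f x m else 0)
      = ∑ x : Pre X T, ∑ b : M t, ∑ m : Pre M T,
          if trunc x tx hx = xb ∧ trunc m (t + 1) h2 = Fin.snoc mh b then f x m else 0 :=
        Finset.sum_congr rfl fun x _ => e x
    _ = _ := Finset.sum_comm

lemma sum_partition_x {T t : ℕ} (ht : t ≤ T) (g : Pre X T → Pre M T → ℝ)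
    (C : Pre M T → Prop) [DecidablePred C] :
    (∑ x : Pre X T, ∑ m : Pre M T, if C m then g x m else 0)
      = ∑ xb : Pre X t, ∑ x : Pre X T, ∑ m : Pre M T,
          if C m ∧ trunc x t ht = xb then g x m else 0 := by
  have e : ∀ (x : Pre X T) (m : Pre M T),
      (if C m then g x m else 0)
        = ∑ xb : Pre X t, if C m ∧ trunc x t ht = xb then g x m else 0 := by
    intro x m
    simp_rw [ite_and_left]
    rw [sum_ite_const]
    congr 1
    rw [Finset.sum_ite_eq Finset.univ (trunc x t ht) (fun _ => g x m)]
    simp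
  calc (∑ x : Pre X T, ∑ m : Pre M T, if C m then g x m else 0)
      = ∑ x : Pre X T, ∑ m : Pre M T, ∑ xb : Pre X t,
          if C m ∧ trunc x t ht = xb then g x m else 0 :=
        Finset.sum_congr rfl fun x _ => Finset.sum_congr rfl fun m _ => e x m
    _ = ∑ x : Pre X T, ∑ xb : Pre X t, ∑ m : Pre M T,
          if C m ∧ trunc x t ht = xb then g x m else 0 :=
        Finset.sum_congr rfl fun x _ => Finset.sum_comm
    _ = _ := Finset.sum_comm

lemma part1 {X M U : ℕ → Type} [∀ t, Fintype (X t)] [∀ t, Fintype (M t)]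
    (T : ℕ) (hT : 0 < T)
    (phat : X 0 → ℝ) (hphat : phat ∈ stdSimplex ℝ (X 0))
    (P : ∀ t, X t → U t → X (t + 1) → ℝ)
    (hP : ∀ t x u, P t x u ∈ stdSimplex ℝ (X (t + 1)))
    (gA : StratA X M U) (gB : StratB X M U)
    (hgA : ∀ t h x, gA t h x ∈ stdSimplex ℝ (M t))
    (t : ℕ) (ht : t < T) (h : HistA X M U t)
    (hpos : 0 < ∑ x : Pre X T, ∑ m : Pre M T,
        if reachA gA gB t (trunc m t ht.le) = h then trajProb hT phat P gA gB x m
        else 0)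
    (xbar : Pre X (t + 1)) :
    (∑ x : Pre X T, ∑ m : Pre M T,
        if reachA gA gB t (trunc m t ht.le) = h ∧ trunc x (t + 1) ht = xbar then
          trajProb hT phat P gA gB x m
        else 0) =
      muA phat P t h xbar *
        (∑ x : Pre X T, ∑ m : Pre M T,
          if reachA gA gB t (trunc m t ht.le) = h then trajProb hT phat P gA gB x m
          else 0) := by
  classical
  have hiff : ∀ m : Pre M T,
      (reachA gA gB t (trunc m t ht.le) = h)
        ↔ (trunc m t ht.le = h.2.1 ∧ reachA gA gB t h.2.1 = h) := by
    intro m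
    constructor
    · intro e
      have h21 : trunc m t ht.le = h.2.1 := by rw [← e, reachA_snd]
      exact ⟨h21, by rw [← h21]; exact e⟩
    · rintro ⟨e1, e2⟩
      rw [e1]
      exact e2
  by_cases Hc : reachA gA gB t h.2.1 = h
  swap
  · exfalso
    have hz : (∑ x : Pre X T, ∑ m : Pre M T,
        if reachA gA gB t (trunc m t ht.le) = h then trajProb hT phat P gA gB x m
        else 0) = 0 := by
      refine Finset.sum_eq_zero fun x _ => Finset.sum_eq_zero fun m _ => ?_
      rw [if_neg]
      intro e
      exact Hc ((hiff m).mp e).2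
    rw [hz] at hpos
    exact lt_irrefl 0 hpos
  have hcond : ∀ m : Pre M T,
      (reachA gA gB t (trunc m t ht.le) = h) ↔ (trunc m t ht.le = h.2.1) := by
    intro m
    rw [hiff m, and_iff_left Hc]
  simp only [hcond] at hpos ⊢
  -- numerator computation
  obtain ⟨k, hk⟩ : ∃ k, t + 1 + k = T := ⟨T - (t + 1), by omega⟩
  have hnum : ∀ xb : Pre X (t + 1),
      (∑ x : Pre X T, ∑ m : Pre M T,
          if trunc m t ht.le = h.2.1 ∧ trunc x (t + 1) ht = xb then
            trajProb hT phat P gA gB x m else 0)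
        = Dfun phat P t h xb := by
    intro xb
    have hswap : (∑ x : Pre X T, ∑ m : Pre M T,
          if trunc m t ht.le = h.2.1 ∧ trunc x (t + 1) ht = xb then
            trajProb hT phat P gA gB x m else 0)
        = ∑ x : Pre X T, ∑ m : Pre M T,
          if trunc x (t + 1) ht = xb ∧ trunc m t ht.le = h.2.1 then
            trajProb hT phat P gA gB x m else 0 := by
      refine Finset.sum_congr rfl fun x _ => Finset.sum_congr rfl fun m _ => ?_
      exact if_congr and_comm rfl rfl
    rw [hswap, split_m ht ht.le ht (trajProb hT phat P gA gB) xb h.2.1]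
    have e5 : ∀ b : M t,
        (∑ x : Pre X T, ∑ m : Pre M T,
            if trunc x (t + 1) ht = xb ∧ trunc m (t + 1) ht = Fin.snoc h.2.1 b then
              trajProb hT phat P gA gB x m else 0)
          = Geq phat P gA gB t xb h.2.1 * gA t h (xb (Fin.last t)) b := by
      intro b
      rw [marg hT phat P gA gB hgA hP k t ht hk xb (Fin.snoc h.2.1 b)]
      rw [Fin.init_snoc, Hc]
      rw [show (Fin.snoc h.2.1 b : Pre M (t + 1)) (Fin.last t) = b from Fin.snoc_last _ _]
    simp_rw [e5]
    rw [← Finset.mul_sum, (hgA t h (xb (Fin.last t))).2, mul_one]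
    rw [Geq_eq_Dfun phat P gA gB t h.2.1 xb, Hc]
  -- denominator
  have hden : (∑ x : Pre X T, ∑ m : Pre M T,
        if trunc m t ht.le = h.2.1 then trajProb hT phat P gA gB x m else 0)
      = ∑ xb : Pre X (t + 1), Dfun phat P t h xb := by
    rw [sum_partition_x ht (trajProb hT phat P gA gB)
      (fun m => trunc m t ht.le = h.2.1)]
    exact Finset.sum_congr rfl fun xb _ => hnum xb
  rw [hnum xbar, hden]
  rw [hden] at hpos
  have hkey := muA_key phat P gA gB hphat hP hgA t h.2.1 (by rw [Hc]; exact hpos) xbar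
  rw [Hc] at hkey
  exact hkey

end Core6
section Core7

variable {X M U : ℕ → Type} [∀ t, Fintype (X t)] [∀ t, Fintype (M t)]

set_option linter.unusedSectionVars false

lemma reachB_fst (gA : StratA X M U) (gB : StratB X M U) (t : ℕ) (mp : Pre M (t + 1)) :
    (reachB gA gB t mp).1 = reachA gA gB t (Fin.init mp) := rfl

lemma reachB_fst_snd (gA : StratA X M U) (gB : StratB X M U) (t : ℕ) (mp : Pre M (t + 1)) :
    (reachB gA gB t mp).1.2.1 = Fin.init mp :=
  reachA_snd gA gB t (Fin.init mp)

lemma reachB_snd_fst (gA : StratA X M U) (gB : StratB X M U) (t : ℕ) (mp : Pre M (t + 1)) :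
    (reachB gA gB t mp).2.1 = gA t (reachA gA gB t (Fin.init mp)) := rfl

lemma reachB_snd_snd (gA : StratA X M U) (gB : StratB X M U) (t : ℕ) (mp : Pre M (t + 1)) :
    (reachB gA gB t mp).2.2 = mp (Fin.last t) := rfl

lemma part2 {X M U : ℕ → Type} [∀ t, Fintype (X t)] [∀ t, Fintype (M t)]
    (T : ℕ) (hT : 0 < T)
    (phat : X 0 → ℝ) (hphat : phat ∈ stdSimplex ℝ (X 0))
    (P : ∀ t, X t → U t → X (t + 1) → ℝ)
    (hP : ∀ t x u, P t x u ∈ stdSimplex ℝ (X (t + 1)))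
    (gA : StratA X M U) (gB : StratB X M U)
    (hgA : ∀ t h x, gA t h x ∈ stdSimplex ℝ (M t))
    (t : ℕ) (ht : t < T) (hb : HistB X M U t)
    (hpos : 0 < ∑ x : Pre X T, ∑ m : Pre M T,
        if reachB gA gB t (trunc m (t + 1) ht) = hb then trajProb hT phat P gA gB x m
        else 0)
    (xbar : Pre X (t + 1)) :
    (∑ x : Pre X T, ∑ m : Pre M T,
        if reachB gA gB t (trunc m (t + 1) ht) = hb ∧ trunc x (t + 1) ht = xbar then
          trajProb hT phat P gA gB x m
        else 0) =
      muB phat P t hb xbar *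
        (∑ x : Pre X T, ∑ m : Pre M T,
          if reachB gA gB t (trunc m (t + 1) ht) = hb then trajProb hT phat P gA gB x m
          else 0) := by
  classical
  set mhat : Pre M (t + 1) := Fin.snoc hb.1.2.1 hb.2.2 with hmhat
  have hiff : ∀ m : Pre M T,
      (reachB gA gB t (trunc m (t + 1) ht) = hb)
        ↔ (trunc m (t + 1) ht = mhat ∧ reachB gA gB t mhat = hb) := by
    intro m
    constructor
    · intro e
      have h1 : hb.1.2.1 = trunc m t ht.le := by
        rw [← e, reachB_fst_snd, trunc_init m ht ht.le]
      have h2 : hb.2.2 = m ⟨t, ht⟩ := by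
        rw [← e, reachB_snd_snd]
        rfl
      have e1 : trunc m (t + 1) ht = mhat := by
        rw [trunc_succ m ht ht.le, hmhat, h1, h2]
      exact ⟨e1, by rw [← e1]; exact e⟩
    · rintro ⟨e1, e2⟩
      rw [e1]
      exact e2
  by_cases HcB : reachB gA gB t mhat = hb
  swap
  · exfalso
    have hz : (∑ x : Pre X T, ∑ m : Pre M T,
        if reachB gA gB t (trunc m (t + 1) ht) = hb then trajProb hT phat P gA gB x m
        else 0) = 0 := by
      refine Finset.sum_eq_zero fun x _ => Finset.sum_eq_zero fun m _ => ?_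
      rw [if_neg]
      intro e
      exact HcB ((hiff m).mp e).2
    rw [hz] at hpos
    exact lt_irrefl 0 hpos
  have hcond : ∀ m : Pre M T,
      (reachB gA gB t (trunc m (t + 1) ht) = hb) ↔ (trunc m (t + 1) ht = mhat) := by
    intro m
    rw [hiff m, and_iff_left HcB]
  simp only [hcond] at hpos ⊢
  have hinit : Fin.init mhat = hb.1.2.1 := Fin.init_snoc _ _
  have HcA : reachA gA gB t hb.1.2.1 = hb.1 := by
    rw [← hinit, ← reachB_fst gA gB t mhat, HcB]
  have hsig : hb.2.1 = gA t hb.1 := by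
    rw [← HcB, reachB_snd_fst, reachB_fst]
  have hlast : mhat (Fin.last t) = hb.2.2 := Fin.snoc_last _ _
  obtain ⟨k, hk⟩ : ∃ k, t + 1 + k = T := ⟨T - (t + 1), by omega⟩
  have hnum : ∀ xb : Pre X (t + 1),
      (∑ x : Pre X T, ∑ m : Pre M T,
          if trunc m (t + 1) ht = mhat ∧ trunc x (t + 1) ht = xb then
            trajProb hT phat P gA gB x m else 0)
        = Dfun phat P t hb.1 xb * hb.2.1 (xb (Fin.last t)) hb.2.2 := by
    intro xb
    have hswap : (∑ x : Pre X T, ∑ m : Pre M T,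
          if trunc m (t + 1) ht = mhat ∧ trunc x (t + 1) ht = xb then
            trajProb hT phat P gA gB x m else 0)
        = ∑ x : Pre X T, ∑ m : Pre M T,
          if trunc x (t + 1) ht = xb ∧ trunc m (t + 1) ht = mhat then
            trajProb hT phat P gA gB x m else 0 := by
      refine Finset.sum_congr rfl fun x _ => Finset.sum_congr rfl fun m _ => ?_
      exact if_congr and_comm rfl rfl
    rw [hswap, marg hT phat P gA gB hgA hP k t ht hk xb mhat]
    rw [hinit, hlast, Geq_eq_Dfun phat P gA gB t hb.1.2.1 xb, HcA, ← hsig]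
  have hden : (∑ x : Pre X T, ∑ m : Pre M T,
        if trunc m (t + 1) ht = mhat then trajProb hT phat P gA gB x m else 0)
      = ∑ xb : Pre X (t + 1), Dfun phat P t hb.1 xb * hb.2.1 (xb (Fin.last t)) hb.2.2 := by
    rw [sum_partition_x ht (trajProb hT phat P gA gB)
      (fun m => trunc m (t + 1) ht = mhat)]
    exact Finset.sum_congr rfl fun xb _ => hnum xb
  rw [hnum xbar, hden]
  rw [hden] at hpos
  have hD0 : ∀ xb : Pre X (t + 1), 0 ≤ Dfun phat P t hb.1 xb := by
    intro xb
    rw [← HcA]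
    exact Dfun_nonneg phat P gA gB hphat hP hgA t hb.1.2.1 xb
  have hσ0 : ∀ xb : Pre X (t + 1), 0 ≤ hb.2.1 (xb (Fin.last t)) hb.2.2 := by
    intro xb
    rw [hsig]
    exact (hgA _ _ _).1 _
  have hN : 0 < ∑ yb : Pre X (t + 1), Dfun phat P t hb.1 yb := by
    obtain ⟨yb, -, hyb⟩ := Finset.exists_lt_of_sum_lt
      (show (∑ _yb : Pre X (t + 1), (0 : ℝ)) < _ by simpa using hpos)
    have hDpos : 0 < Dfun phat P t hb.1 yb := by
      rcases mul_pos_iff.mp hyb with ⟨h1, _⟩ | ⟨_, h2⟩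
      · exact h1
      · have := hσ0 yb
        linarith
    exact Finset.sum_pos' (fun y _ => hD0 y) ⟨yb, Finset.mem_univ yb, hDpos⟩
  have hNne : (∑ yb : Pre X (t + 1), Dfun phat P t hb.1 yb) ≠ 0 := ne_of_gt hN
  have hmuA : ∀ y : Pre X (t + 1),
      muA phat P t hb.1 y
        = Dfun phat P t hb.1 y / ∑ yb : Pre X (t + 1), Dfun phat P t hb.1 yb := by
    intro y
    have hkey := muA_key phat P gA gB hphat hP hgA t hb.1.2.1 (by rw [HcA]; exact hN) y
    rw [HcA] at hkey
    rw [hkey]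
    field_simp
  have hNσne : (∑ xb : Pre X (t + 1),
      Dfun phat P t hb.1 xb * hb.2.1 (xb (Fin.last t)) hb.2.2) ≠ 0 := ne_of_gt hpos
  have hdenB : (∑ ys : Pre X (t + 1),
      muA phat P t hb.1 ys * hb.2.1 (ys (Fin.last t)) hb.2.2)
      = (∑ xb : Pre X (t + 1),
          Dfun phat P t hb.1 xb * hb.2.1 (xb (Fin.last t)) hb.2.2) /
        ∑ yb : Pre X (t + 1), Dfun phat P t hb.1 yb := by
    simp_rw [hmuA, div_mul_eq_mul_div]
    rw [← Finset.sum_div]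
  simp only [muB]
  rw [hdenB, hmuA xbar]
  field_simp
  try ring

end Core7

/-- Lemma 5: the beliefs `μ^{*A}, μ^{*B}` are consistent with every pure strategy profile
`g = (gA, gB)`: for every stage `t` and every history of positive probability under
`Pr^g`, the conditional distribution of the state trajectory `X_{0:t}` given that history
equals the strategy-independent belief at that history (stated multiplicatively:
joint probability = belief × probability of the history). -/
theorem strategyIndependent_beliefs_consistent
    {X M U : ℕ → Type} [∀ t, Fintype (X t)] [∀ t, Fintype (M t)]
    [∀ t, Nonempty (X t)] [∀ t, Nonempty (M t)] [∀ t, Nonempty (U t)]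
    (T : ℕ) (hT : 0 < T)
    (phat : X 0 → ℝ) (hphat : phat ∈ stdSimplex ℝ (X 0))
    (P : ∀ t, X t → U t → X (t + 1) → ℝ)
    (hP : ∀ t x u, P t x u ∈ stdSimplex ℝ (X (t + 1)))
    (gA : StratA X M U) (gB : StratB X M U)
    (hgA : ∀ t h x, gA t h x ∈ stdSimplex ℝ (M t)) :
    -- part 1: consistency of the principal's belief `μ_t^{*A}` (stages `t < T`)
    (∀ (t : ℕ) (ht : t < T) (h : HistA X M U t),
      (0 < ∑ x : Pre X T, ∑ m : Pre M T,
          if reachA gA gB t (trunc m t ht.le) = h then trajProb hT phat P gA gB x m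
          else 0) →
      ∀ xbar : Pre X (t + 1),
        (∑ x : Pre X T, ∑ m : Pre M T,
            if reachA gA gB t (trunc m t ht.le) = h ∧ trunc x (t + 1) ht = xbar then
              trajProb hT phat P gA gB x m
            else 0) =
          muA phat P t h xbar *
            (∑ x : Pre X T, ∑ m : Pre M T,
              if reachA gA gB t (trunc m t ht.le) = h then trajProb hT phat P gA gB x m
              else 0)) ∧
    -- part 2: consistency of the receiver's belief `μ_t^{*B}` (stages `t < T`)
    (∀ (t : ℕ) (ht : t < T) (hb : HistB X M U t),
      (0 < ∑ x : Pre X T, ∑ m : Pre M T,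
          if reachB gA gB t (trunc m (t + 1) ht) = hb then trajProb hT phat P gA gB x m
          else 0) →
      ∀ xbar : Pre X (t + 1),
        (∑ x : Pre X T, ∑ m : Pre M T,
            if reachB gA gB t (trunc m (t + 1) ht) = hb ∧ trunc x (t + 1) ht = xbar then
              trajProb hT phat P gA gB x m
            else 0) =
          muB phat P t hb xbar *
            (∑ x : Pre X T, ∑ m : Pre M T,
              if reachB gA gB t (trunc m (t + 1) ht) = hb then trajProb hT phat P gA gB x m
              else 0)) := by
  constructor
  · intro t ht h hpos xbar
    exact part1 T hT phat hphat P hP gA gB hgA t ht h hpos xbar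
  · intro t ht hb hpos xbar
    exact part2 T hT phat hphat P hP gA gB hgA t ht hb hpos xbar

end SignalPicking
end
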